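/- arXiv:2408.05611 — 2 statements merged into one kernel-verified Lean document; each statement's English description precedes it below -/
import Mathlib

section
/- Let G be a Cartesian product of finite graphs G_1, ..., G_k, each with at least one vertex. Then the expansion of G satisfies h(G) >= (1/2) * min_{1 <= i <= k} h(G_i). -/
open scoped BigOperators

/-- The number of edges of `G` with exactly one endpoint in `S`. -/
noncomputable def boundarySize {V : Type*} (G : SimpleGraph V) (S : Set V) : ℕ :=
  {e ∈ G.edgeSet | ∃ u ∈ e, u ∈ S ∧ ∃ v ∈ e, v ∉ S}.ncard

/-- The (edge) expansion of `G`: the minimum of `|∂S|/|S|` over nonempty vertex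
subsets `S` with `|S| ≤ |V|/2`. -/
noncomputable def expansion {V : Type*} (G : SimpleGraph V) : ℝ :=
  sInf {x : ℝ | ∃ S : Set V, S.Nonempty ∧ 2 * S.ncard ≤ Nat.card V ∧
    x = (boundarySize G S : ℝ) / (S.ncard : ℝ)}

/-- The Cartesian (box) product of a family of graphs: two tuples are adjacent iff they differ
in exactly one coordinate and the differing coordinates are adjacent in the corresponding
factor. -/
def boxProdMany {k : ℕ} {V : Fin k → Type*} (G : ∀ i, SimpleGraph (V i)) :
    SimpleGraph (∀ i, V i) where
  Adj x y := ∃ i, (G i).Adj (x i) (y i) ∧ ∀ j, j ≠ i → x j = y j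
  symm := by
    constructor
    rintro x y ⟨i, h, hj⟩
    exact ⟨i, (G i).adj_symm h, fun j hji => (hj j hji).symm⟩
  loopless := ⟨fun x ⟨i, h, _⟩ => (G i).irrefl h⟩

open Finset

/-- ordered-pair boundary count -/
noncomputable def bd {α : Type*} (G : SimpleGraph α) (S : Finset α) : ℕ :=
  {p : α × α | G.Adj p.1 p.2 ∧ p.1 ∈ S ∧ p.2 ∉ S}.ncard

lemma bd_eq_filter {α : Type*} [Fintype α] [DecidableEq α] (G : SimpleGraph α) [DecidableRel G.Adj]
    (S : Finset α) :
    bd G S = (Finset.univ.filter (fun p : α × α => G.Adj p.1 p.2 ∧ p.1 ∈ S ∧ p.2 ∉ S)).card := by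
  rw [bd, show {p : α × α | G.Adj p.1 p.2 ∧ p.1 ∈ S ∧ p.2 ∉ S}
      = ↑(Finset.univ.filter (fun p : α × α => G.Adj p.1 p.2 ∧ p.1 ∈ S ∧ p.2 ∉ S)) from by
    ext p; simp, Set.ncard_coe_finset]

lemma boundarySize_eq_bd {α : Type*} (G : SimpleGraph α) (S : Set α)
    (T : Finset α) (hT : ∀ x, x ∈ T ↔ x ∈ S) :
    boundarySize G S = bd G T := by
  classical
  have himg : (fun p : α × α => s(p.1, p.2)) '' {p : α × α | G.Adj p.1 p.2 ∧ p.1 ∈ S ∧ p.2 ∉ S}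
      = {e ∈ G.edgeSet | ∃ u ∈ e, u ∈ S ∧ ∃ v ∈ e, v ∉ S} := by
    ext e
    refine Sym2.inductionOn e ?_
    intro x y
    constructor
    · rintro ⟨⟨u, v⟩, ⟨hadj, hu, hv⟩, heq⟩
      simp only [Sym2.eq_iff] at heq
      rcases heq with ⟨rfl, rfl⟩ | ⟨rfl, rfl⟩
      · exact ⟨hadj, u, by simp, hu, v, by simp, hv⟩
      · exact ⟨hadj.symm, u, by simp, hu, v, by simp, hv⟩
    · rintro ⟨he, u, hu, huS, v, hv, hvS⟩
      rw [Sym2.mem_iff] at hu hv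
      have hne : u ≠ v := fun h => hvS (h ▸ huS)
      rcases hu with rfl | rfl <;> rcases hv with rfl | rfl
      · exact absurd rfl hne
      · exact ⟨(u, v), ⟨he, huS, hvS⟩, rfl⟩
      · exact ⟨(u, v), ⟨he.symm, huS, hvS⟩, Sym2.eq_swap⟩
      · exact absurd rfl hne
  have hinj : Set.InjOn (fun p : α × α => s(p.1, p.2))
      {p : α × α | G.Adj p.1 p.2 ∧ p.1 ∈ S ∧ p.2 ∉ S} := by
    rintro ⟨x, y⟩ ⟨_, hx, hy⟩ ⟨x', y'⟩ ⟨_, hx', hy'⟩ heq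
    simp only [Sym2.eq_iff] at heq
    rcases heq with ⟨rfl, rfl⟩ | ⟨rfl, rfl⟩
    · rfl
    · exact absurd hx' hy
  have hset : {p : α × α | G.Adj p.1 p.2 ∧ p.1 ∈ S ∧ p.2 ∉ S}
      = {p : α × α | G.Adj p.1 p.2 ∧ p.1 ∈ T ∧ p.2 ∉ T} := by
    ext p; simp [hT]
  rw [boundarySize, ← himg, Set.ncard_image_of_injOn hinj, bd, hset]

lemma bd_compl {α : Type*} [Fintype α] [DecidableEq α] (G : SimpleGraph α) (S : Finset α) :
    bd G Sᶜ = bd G S := by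
  classical
  rw [bd_eq_filter, bd_eq_filter]
  apply Finset.card_nbij' (i := fun p : α × α => (p.2, p.1)) (j := fun p : α × α => (p.2, p.1))
  · intro p hp
    simp only [Finset.mem_coe, mem_filter, mem_univ, true_and, Finset.mem_compl, not_not] at hp ⊢
    exact ⟨hp.1.symm, hp.2.2, hp.2.1⟩
  · intro p hp
    simp only [Finset.mem_coe, mem_filter, mem_univ, true_and, Finset.mem_compl, not_not] at hp ⊢
    exact ⟨hp.1.symm, hp.2.2, hp.2.1⟩
  · intro p _; rfl
  · intro p _; rfl

lemma bd_two_sided {α : Type*} [Fintype α] (G : SimpleGraph α) (c : ℝ)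
    (hG : ∀ T : Finset α, 2 * T.card ≤ Fintype.card α → c * T.card ≤ bd G T)
    (T : Finset α) :
    c * min (T.card : ℝ) ((Fintype.card α : ℝ) - T.card) ≤ bd G T := by
  classical
  have hle : T.card ≤ Fintype.card α := T.card_le_univ
  rcases le_or_gt (2 * T.card) (Fintype.card α) with h | h
  · have : min (T.card : ℝ) ((Fintype.card α : ℝ) - T.card) = T.card := by
      apply min_eq_left
      have : (2 * T.card : ℝ) ≤ (Fintype.card α : ℝ) := by exact_mod_cast h
      linarith
    rw [this]; exact hG T h
  · have hcc : Tᶜ.card = Fintype.card α - T.card := Finset.card_compl T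
    have h2 : 2 * Tᶜ.card ≤ Fintype.card α := by omega
    have := hG Tᶜ h2
    rw [bd_compl] at this
    have hmin : min (T.card : ℝ) ((Fintype.card α : ℝ) - T.card) = (Tᶜ.card : ℝ) := by
      rw [hcc, Nat.cast_sub hle]
      apply min_eq_right
      have : (Fintype.card α : ℝ) < (2 * T.card : ℝ) := by exact_mod_cast h
      push_cast at this ⊢
      linarith
    rw [hmin]; exact this

section Fibers

variable {α β : Type*} [Fintype α] [Fintype β] [DecidableEq α] [DecidableEq β]

def colF (S : Finset (α × β)) (b : β) : Finset α := univ.filter fun a => (a, b) ∈ S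

def rowF (S : Finset (α × β)) (a : α) : Finset β := univ.filter fun b => (a, b) ∈ S

lemma sum_colF (S : Finset (α × β)) : ∑ b, (colF S b).card = S.card := by
  classical
  rw [Finset.card_eq_sum_card_fiberwise (f := Prod.snd) (t := univ) (fun x _ => mem_univ _)]
  refine Finset.sum_congr rfl fun b _ => ?_
  apply Finset.card_nbij' (i := fun a : α => (a, b)) (j := fun p : α × β => p.1)
  · intro a ha
    simp only [Finset.mem_coe, colF, mem_filter, mem_univ, true_and] at ha
    simp [ha]
  · intro p hp
    simp only [Finset.mem_coe, colF, mem_filter, mem_univ, true_and] at hp ⊢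
    rcases hp with ⟨h1, h2⟩
    rwa [show (p.1, b) = p from by rw [← h2]]
  · intro a ha
    rfl
  · intro p hp
    simp only [Finset.mem_coe, mem_filter] at hp
    rw [← hp.2]

lemma sum_rowF (S : Finset (α × β)) : ∑ a, (rowF S a).card = S.card := by
  classical
  rw [Finset.card_eq_sum_card_fiberwise (f := Prod.fst) (t := univ) (fun x _ => mem_univ _)]
  refine Finset.sum_congr rfl fun a _ => ?_
  apply Finset.card_nbij' (i := fun b : β => (a, b)) (j := fun p : α × β => p.2)
  · intro b hb
    simp only [Finset.mem_coe, rowF, mem_filter, mem_univ, true_and] at hb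
    simp [hb]
  · intro p hp
    simp only [Finset.mem_coe, rowF, mem_filter, mem_univ, true_and] at hp ⊢
    rcases hp with ⟨h1, h2⟩
    rwa [show (a, p.2) = p from by rw [← h2]]
  · intro b hb
    rfl
  · intro p hp
    simp only [Finset.mem_coe, mem_filter] at hp
    rw [← hp.2]

end Fibers

section Decomp

variable {α β : Type*} [Fintype α] [Fintype β] [DecidableEq α] [DecidableEq β]

open SimpleGraph in
lemma bd_boxProd_ge (G1 : SimpleGraph α) (G2 : SimpleGraph β) (S : Finset (α × β)) :
    ∑ b, bd G1 (colF S b) + ∑ a, bd G2 (rowF S a) ≤ bd (G1 □ G2) S := by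
  classical
  rw [bd_eq_filter]
  set D1 : Finset ((α × β) × (α × β)) := univ.filter
    (fun p => G1.Adj p.1.1 p.2.1 ∧ p.1.2 = p.2.2 ∧ p.1 ∈ S ∧ p.2 ∉ S) with hD1
  set D2 : Finset ((α × β) × (α × β)) := univ.filter
    (fun p => p.1.1 = p.2.1 ∧ G2.Adj p.1.2 p.2.2 ∧ p.1 ∈ S ∧ p.2 ∉ S) with hD2
  have hsub : D1 ∪ D2 ⊆ univ.filter
      (fun p : (α × β) × (α × β) => (G1 □ G2).Adj p.1 p.2 ∧ p.1 ∈ S ∧ p.2 ∉ S) := by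
    intro p hp
    simp only [hD1, hD2, mem_union, mem_filter, mem_univ, true_and, boxProd_adj] at hp ⊢
    tauto
  have hdisj : Disjoint D1 D2 := by
    rw [Finset.disjoint_left]
    intro p h1 h2
    simp only [hD1, hD2, mem_filter, mem_univ, true_and] at h1 h2
    have := h1.1
    rw [h2.1] at this
    exact G1.loopless.irrefl _ this
  have hcard1 : D1.card = ∑ b, bd G1 (colF S b) := by
    rw [Finset.card_eq_sum_card_fiberwise (f := fun p => p.1.2) (t := univ)
      (fun x _ => mem_univ _)]
    refine Finset.sum_congr rfl fun b _ => ?_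
    rw [bd_eq_filter]
    apply Finset.card_nbij' (i := fun p : (α × β) × (α × β) => (p.1.1, p.2.1))
      (j := fun q : α × α => ((q.1, b), (q.2, b)))
    · intro p hp
      simp only [Finset.mem_coe, hD1, mem_filter, mem_univ, true_and, colF] at hp ⊢
      obtain ⟨⟨hadj, he, hS1, hS2⟩, hb⟩ := hp
      refine ⟨hadj, ?_, ?_⟩
      · rwa [show (p.1.1, b) = p.1 from by rw [← hb]]
      · intro hmem
        have hb2 : p.2.2 = b := by rw [← he, hb]
        exact hS2 (by rwa [show (p.2.1, b) = p.2 from by rw [← hb2]] at hmem)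
    · intro q hq
      simp only [Finset.mem_coe, hD1, mem_filter, mem_univ, true_and, colF] at hq ⊢
      tauto
    · intro p hp
      simp only [Finset.mem_coe, hD1, mem_filter, mem_univ, true_and] at hp
      obtain ⟨⟨hadj, he, _, _⟩, hb⟩ := hp
      ext <;> simp [← hb, ← he]
    · intro q _; rfl
  have hcard2 : D2.card = ∑ a, bd G2 (rowF S a) := by
    rw [Finset.card_eq_sum_card_fiberwise (f := fun p => p.1.1) (t := univ)
      (fun x _ => mem_univ _)]
    refine Finset.sum_congr rfl fun a _ => ?_
    rw [bd_eq_filter]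
    apply Finset.card_nbij' (i := fun p : (α × β) × (α × β) => (p.1.2, p.2.2))
      (j := fun q : β × β => ((a, q.1), (a, q.2)))
    · intro p hp
      simp only [Finset.mem_coe, hD2, mem_filter, mem_univ, true_and, rowF] at hp ⊢
      obtain ⟨⟨he, hadj, hS1, hS2⟩, hb⟩ := hp
      refine ⟨hadj, ?_, ?_⟩
      · rwa [show (a, p.1.2) = p.1 from by rw [← hb]]
      · intro hmem
        have hb2 : p.2.1 = a := by rw [← he, hb]
        exact hS2 (by rwa [show (a, p.2.2) = p.2 from by rw [← hb2]] at hmem)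
    · intro q hq
      simp only [Finset.mem_coe, hD2, mem_filter, mem_univ, true_and, rowF] at hq ⊢
      tauto
    · intro p hp
      simp only [Finset.mem_coe, hD2, mem_filter, mem_univ, true_and] at hp
      obtain ⟨⟨he, hadj, _, _⟩, hb⟩ := hp
      ext <;> simp [← hb, ← he]
    · intro q _; rfl
  calc ∑ b, bd G1 (colF S b) + ∑ a, bd G2 (rowF S a)
      = (D1 ∪ D2).card := by rw [Finset.card_union_of_disjoint hdisj, hcard1, hcard2]
    _ ≤ _ := Finset.card_le_card hsub

end Decomp

section LemLFull

variable {α β : Type*} [Fintype α] [Fintype β] [DecidableEq α] [DecidableEq β]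

lemma lemL' (S : Finset (α × β))
    (ht : 2 * S.card ≤ Fintype.card α * Fintype.card β) :
    (S.card : ℝ) ≤
      2 * (∑ b, min ((colF S b).card : ℝ) ((Fintype.card α : ℝ) - (colF S b).card)) +
      ∑ a, min ((rowF S a).card : ℝ) ((Fintype.card β : ℝ) - (rowF S a).card) := by
  classical
  set n := Fintype.card α with hn
  set M := Fintype.card β with hM
  set W : Finset α := univ.filter (fun a => M < 2 * (rowF S a).card) with hW
  set w := ∑ a ∈ W, (rowF S a).card with hw
  have hrowle : ∀ a, (rowF S a).card ≤ M := fun a => Finset.card_le_univ _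
  have hcolle : ∀ b, (colF S b).card ≤ n := fun b => Finset.card_le_univ _
  have hρn : W.card ≤ n := Finset.card_le_univ _
  have hsplitrow : w + ∑ a ∈ univ.filter (fun a => ¬(M < 2 * (rowF S a).card)),
      (rowF S a).card = S.card := by
    rw [hw, hW, Finset.sum_filter_add_sum_filter_not]
    exact sum_rowF S
  have hwcast : (w : ℝ) = ∑ a ∈ W, ((rowF S a).card : ℝ) := by
    rw [hw]; push_cast; rfl
  -- A side
  have hA : ((S.card : ℝ) - w) + ((W.card : ℝ) * M - w) ≤
      ∑ a, min ((rowF S a).card : ℝ) ((M : ℝ) - (rowF S a).card) := by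
    have hsplit := Finset.sum_filter_add_sum_filter_not univ
      (fun a => M < 2 * (rowF S a).card)
      (fun a => min ((rowF S a).card : ℝ) ((M : ℝ) - (rowF S a).card))
    have e1 : ∑ a ∈ W, min ((rowF S a).card : ℝ) ((M : ℝ) - (rowF S a).card)
        = (W.card : ℝ) * M - w := by
      have : ∀ a ∈ W, min ((rowF S a).card : ℝ) ((M : ℝ) - (rowF S a).card)
          = (M : ℝ) - (rowF S a).card := by
        intro a ha
        rw [hW] at ha
        have h2 : M < 2 * (rowF S a).card := (Finset.mem_filter.mp ha).2
        have h2' : (M : ℝ) < 2 * (rowF S a).card := by exact_mod_cast h2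
        apply min_eq_right; linarith
      rw [Finset.sum_congr rfl this, Finset.sum_sub_distrib, Finset.sum_const,
        nsmul_eq_mul, hwcast]
    have e2 : ∑ a ∈ univ.filter (fun a => ¬(M < 2 * (rowF S a).card)),
        min ((rowF S a).card : ℝ) ((M : ℝ) - (rowF S a).card)
        = (S.card : ℝ) - w := by
      have : ∀ a ∈ univ.filter (fun a => ¬(M < 2 * (rowF S a).card)),
          min ((rowF S a).card : ℝ) ((M : ℝ) - (rowF S a).card)
          = ((rowF S a).card : ℝ) := by
        intro a ha
        have h2 : ¬(M < 2 * (rowF S a).card) := (Finset.mem_filter.mp ha).2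
        have h2' : 2 * ((rowF S a).card : ℝ) ≤ M := by
          push_neg at h2; exact_mod_cast h2
        apply min_eq_left; linarith
      rw [Finset.sum_congr rfl this]
      have := hsplitrow
      have hcast : (w : ℝ) + ∑ a ∈ univ.filter (fun a => ¬(M < 2 * (rowF S a).card)),
          ((rowF S a).card : ℝ) = (S.card : ℝ) := by
        exact_mod_cast congrArg (Nat.cast : ℕ → ℝ) this
      linarith
    linarith [hsplit, e1, e2]
  -- B side : claim B
  set H : Finset β := univ.filter (fun b => n < 2 * (colF S b).card) with hH
  have hB : (w : ℝ) ≤ (∑ b, min ((colF S b).card : ℝ) ((n : ℝ) - (colF S b).card))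
      + (W.card : ℝ) * M / 2 := by
    set wcol : β → ℕ := fun b => (W.filter (fun a => (a, b) ∈ S)).card with hwcol
    have hwsum : ∑ b, wcol b = w := by
      rw [hw]
      have : ∀ b, wcol b = ∑ a ∈ W, if (a, b) ∈ S then 1 else 0 := by
        intro b; rw [hwcol]; exact Finset.card_filter _ _
      rw [Finset.sum_congr rfl fun b _ => this b, Finset.sum_comm]
      refine Finset.sum_congr rfl fun a _ => ?_
      rw [rowF, ← Finset.card_filter]
    have hwρ : ∀ b, wcol b ≤ W.card := fun b => Finset.card_filter_le _ _
    have hwc : ∀ b, wcol b ≤ (colF S b).card := by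
      intro b
      apply Finset.card_le_card
      intro a ha
      simp only [hwcol, Finset.mem_filter] at ha
      simp only [colF, Finset.mem_filter]
      exact ⟨Finset.mem_univ _, ha.2⟩
    have hsplitB := Finset.sum_filter_add_sum_filter_not univ
      (fun b => n < 2 * (colF S b).card)
      (fun b => min ((colF S b).card : ℝ) ((n : ℝ) - (colF S b).card))
    have hsplitw := Finset.sum_filter_add_sum_filter_not univ
      (fun b => n < 2 * (colF S b).card) (fun b => (wcol b : ℝ))
    -- light columns
    have elight : ∑ b ∈ univ.filter (fun b => ¬(n < 2 * (colF S b).card)), (wcol b : ℝ)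
        ≤ ∑ b ∈ univ.filter (fun b => ¬(n < 2 * (colF S b).card)),
          min ((colF S b).card : ℝ) ((n : ℝ) - (colF S b).card) := by
      apply Finset.sum_le_sum
      intro b hb
      have h2 : ¬(n < 2 * (colF S b).card) := (Finset.mem_filter.mp hb).2
      have h2' : 2 * ((colF S b).card : ℝ) ≤ n := by
        push_neg at h2; exact_mod_cast h2
      have := hwc b
      have hc : (wcol b : ℝ) ≤ ((colF S b).card : ℝ) := by exact_mod_cast this
      rw [min_eq_left (by linarith)]
      exact hc
    -- heavy columns
    have eheavy : ∑ b ∈ H, (wcol b : ℝ)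
        ≤ (∑ b ∈ H, min ((colF S b).card : ℝ) ((n : ℝ) - (colF S b).card))
          + (W.card : ℝ) * M / 2 := by
      have emin : ∀ b ∈ H, min ((colF S b).card : ℝ) ((n : ℝ) - (colF S b).card)
          = (n : ℝ) - (colF S b).card := by
        intro b hb
        rw [hH] at hb
        have h2 : n < 2 * (colF S b).card := (Finset.mem_filter.mp hb).2
        have h2' : (n : ℝ) < 2 * (colF S b).card := by exact_mod_cast h2
        apply min_eq_right; linarith
      rw [Finset.sum_congr rfl emin, Finset.sum_sub_distrib, Finset.sum_const, nsmul_eq_mul]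
      have hwH : ∑ b ∈ H, (wcol b : ℝ) ≤ (H.card : ℝ) * W.card := by
        calc ∑ b ∈ H, (wcol b : ℝ) ≤ ∑ _b ∈ H, (W.card : ℝ) :=
              Finset.sum_le_sum fun b _ => by exact_mod_cast hwρ b
          _ = (H.card : ℝ) * W.card := by rw [Finset.sum_const, nsmul_eq_mul]
      have hsH_le_t : ∑ b ∈ H, ((colF S b).card : ℝ) ≤ (S.card : ℝ) := by
        have h1 : ∑ b ∈ H, (colF S b).card ≤ ∑ b, (colF S b).card :=
          Finset.sum_le_sum_of_subset (Finset.subset_univ H)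
        have h2 := sum_colF S
        have : ∑ b ∈ H, (colF S b).card ≤ S.card := by omega
        exact_mod_cast this
      rcases le_or_gt (2 * H.card) M with hcase | hcase
      · -- few heavy columns
        have h1 : (H.card : ℝ) * W.card ≤ (W.card : ℝ) * M / 2 := by
          have : (2 * H.card : ℝ) ≤ M := by exact_mod_cast hcase
          nlinarith [Nat.cast_nonneg (α := ℝ) W.card, Nat.cast_nonneg (α := ℝ) H.card]
        have h2 : (0 : ℝ) ≤ ∑ b ∈ H, ((n : ℝ) - (colF S b).card) := by
          apply Finset.sum_nonneg
          intro b _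
          have := hcolle b
          have : ((colF S b).card : ℝ) ≤ n := by exact_mod_cast this
          linarith
        rw [Finset.sum_sub_distrib, Finset.sum_const, nsmul_eq_mul] at h2
        linarith
      · -- many heavy columns
        have hHM : (H.card : ℝ) ≤ M := by
          exact_mod_cast (Finset.card_le_univ H)
        have hWn : (W.card : ℝ) ≤ n := by exact_mod_cast hρn
        have hteq : 2 * (S.card : ℝ) ≤ (n : ℝ) * M := by exact_mod_cast ht
        have hcase' : (M : ℝ) < 2 * H.card := by exact_mod_cast hcase
        nlinarith [hwH, hsH_le_t]
    calc (w : ℝ) = ∑ b, (wcol b : ℝ) := by rw [← hwsum]; push_cast; rfl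
      _ = ∑ b ∈ H, (wcol b : ℝ)
          + ∑ b ∈ univ.filter (fun b => ¬(n < 2 * (colF S b).card)), (wcol b : ℝ) := by
          rw [hH]; rw [hsplitw]
      _ ≤ _ := by
          have := hsplitB
          linarith [eheavy, elight]
  linarith [hA, hB]

lemma colF_compl (S : Finset (α × β)) (b : β) : colF Sᶜ b = (colF S b)ᶜ := by
  ext a
  simp [colF, Finset.mem_compl]

lemma rowF_compl (S : Finset (α × β)) (a : α) : rowF Sᶜ a = (rowF S a)ᶜ := by
  ext b
  simp [rowF, Finset.mem_compl]

lemma lemL (S : Finset (α × β)) :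
    min (S.card : ℝ) ((Fintype.card α : ℝ) * (Fintype.card β : ℝ) - S.card) ≤
      2 * (∑ b, min ((colF S b).card : ℝ) ((Fintype.card α : ℝ) - (colF S b).card)) +
      ∑ a, min ((rowF S a).card : ℝ) ((Fintype.card β : ℝ) - (rowF S a).card) := by
  classical
  set n := Fintype.card α with hn
  set M := Fintype.card β with hM
  have hcardprod : Fintype.card (α × β) = n * M := Fintype.card_prod α β
  have hSle : S.card ≤ n * M := by
    have := Finset.card_le_univ S
    omega
  rcases le_or_gt (2 * S.card) (n * M) with h | h
  · have hmin : min (S.card : ℝ) ((n : ℝ) * M - S.card) = (S.card : ℝ) := by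
      apply min_eq_left
      have : (2 * S.card : ℝ) ≤ (n : ℝ) * M := by exact_mod_cast h
      linarith
    rw [hmin]
    exact lemL' S h
  · -- complement
    have hc : Sᶜ.card = n * M - S.card := by
      rw [Finset.card_compl, hcardprod]
    have h2 : 2 * Sᶜ.card ≤ n * M := by omega
    have key := lemL' Sᶜ h2
    have hmin : min (S.card : ℝ) ((n : ℝ) * M - S.card) = (Sᶜ.card : ℝ) := by
      rw [hc, Nat.cast_sub hSle]
      push_cast
      apply min_eq_right
      have : (n : ℝ) * M < 2 * S.card := by exact_mod_cast h
      linarith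
    rw [hmin]
    have ecol : ∀ b, min ((colF Sᶜ b).card : ℝ) ((n : ℝ) - (colF Sᶜ b).card)
        = min ((colF S b).card : ℝ) ((n : ℝ) - (colF S b).card) := by
      intro b
      rw [colF_compl, Finset.card_compl, Nat.cast_sub (Finset.card_le_univ _), ← hn]
      rw [show (n : ℝ) - ((n : ℝ) - (colF S b).card) = ((colF S b).card : ℝ) by ring]
      exact min_comm _ _
    have erow : ∀ a, min ((rowF Sᶜ a).card : ℝ) ((M : ℝ) - (rowF Sᶜ a).card)
        = min ((rowF S a).card : ℝ) ((M : ℝ) - (rowF S a).card) := by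
      intro a
      rw [rowF_compl, Finset.card_compl, Nat.cast_sub (Finset.card_le_univ _), ← hM]
      rw [show (M : ℝ) - ((M : ℝ) - (rowF S a).card) = ((rowF S a).card : ℝ) by ring]
      exact min_comm _ _
    calc (Sᶜ.card : ℝ)
        ≤ 2 * (∑ b, min ((colF Sᶜ b).card : ℝ) ((n : ℝ) - (colF Sᶜ b).card)) +
          ∑ a, min ((rowF Sᶜ a).card : ℝ) ((M : ℝ) - (rowF Sᶜ a).card) := key
      _ = _ := by
          rw [Finset.sum_congr rfl fun b _ => ecol b, Finset.sum_congr rfl fun a _ => erow a]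

lemma two_factor (G1 : SimpleGraph α) (G2 : SimpleGraph β) (c : ℝ) (hc : 0 ≤ c)
    (h1 : ∀ T : Finset α, c * min (T.card : ℝ) ((Fintype.card α : ℝ) - T.card) ≤ bd G1 T)
    (h2 : ∀ T : Finset β, c / 2 * min (T.card : ℝ) ((Fintype.card β : ℝ) - T.card) ≤ bd G2 T)
    (S : Finset (α × β)) :
    c / 2 * min (S.card : ℝ) ((Fintype.card (α × β) : ℝ) - S.card) ≤ bd (G1 □ G2) S := by
  classical
  have hdec := bd_boxProd_ge G1 G2 S
  have hB : c * (∑ b, min ((colF S b).card : ℝ) ((Fintype.card α : ℝ) - (colF S b).card))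
      ≤ ∑ b, (bd G1 (colF S b) : ℝ) := by
    rw [Finset.mul_sum]
    exact Finset.sum_le_sum fun b _ => h1 (colF S b)
  have hA : c / 2 * (∑ a, min ((rowF S a).card : ℝ) ((Fintype.card β : ℝ) - (rowF S a).card))
      ≤ ∑ a, (bd G2 (rowF S a) : ℝ) := by
    rw [Finset.mul_sum]
    exact Finset.sum_le_sum fun a _ => h2 (rowF S a)
  have hL := lemL S
  have hcast : (Fintype.card (α × β) : ℝ) = (Fintype.card α : ℝ) * (Fintype.card β : ℝ) := by
    rw [Fintype.card_prod]; push_cast; ring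
  rw [hcast]
  have hdec' : (∑ b, (bd G1 (colF S b) : ℝ)) + (∑ a, (bd G2 (rowF S a) : ℝ))
      ≤ (bd (G1 □ G2) S : ℝ) := by exact_mod_cast hdec
  have hmul := mul_le_mul_of_nonneg_left hL (by linarith : (0:ℝ) ≤ c / 2)
  calc c / 2 * min (S.card : ℝ) ((Fintype.card α : ℝ) * (Fintype.card β : ℝ) - S.card)
      ≤ c / 2 * (2 * (∑ b, min ((colF S b).card : ℝ) ((Fintype.card α : ℝ) - (colF S b).card)) +
          ∑ a, min ((rowF S a).card : ℝ) ((Fintype.card β : ℝ) - (rowF S a).card)) := hmul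
    _ = c * (∑ b, min ((colF S b).card : ℝ) ((Fintype.card α : ℝ) - (colF S b).card)) +
        c / 2 * (∑ a, min ((rowF S a).card : ℝ) ((Fintype.card β : ℝ) - (rowF S a).card)) := by
        ring
    _ ≤ (bd (G1 □ G2) S : ℝ) := by linarith
end LemLFull

lemma bd_map {α β : Type*} [DecidableEq β] (e : α ≃ β) (G : SimpleGraph α) (H : SimpleGraph β)
    (hadj : ∀ x y, G.Adj x y ↔ H.Adj (e x) (e y)) (S : Finset α) :
    bd G S = bd H (S.image e) := by
  rw [bd, bd]
  have hset : {p : β × β | H.Adj p.1 p.2 ∧ p.1 ∈ S.image e ∧ p.2 ∉ S.image e}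
      = (fun p : α × α => ((e p.1 : β), (e p.2 : β))) ''
        {p : α × α | G.Adj p.1 p.2 ∧ p.1 ∈ S ∧ p.2 ∉ S} := by
    ext ⟨u, v⟩
    constructor
    · rintro ⟨huv, hu, hv⟩
      obtain ⟨x, hx, rfl⟩ := Finset.mem_image.mp hu
      refine ⟨(x, e.symm v), ⟨?_, hx, ?_⟩, ?_⟩
      · rw [hadj]; simpa using huv
      · intro hmem
        exact hv (by simpa using Finset.mem_image_of_mem e hmem)
      · simp
    · rintro ⟨⟨x, y⟩, ⟨hxy, hx, hy⟩, heq⟩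
      obtain ⟨h1, h2⟩ := Prod.mk.injEq .. ▸ heq
      subst h1; subst h2
      refine ⟨(hadj x y).mp hxy, Finset.mem_image_of_mem e hx, ?_⟩
      intro hmem
      obtain ⟨z, hz, hze⟩ := Finset.mem_image.mp hmem
      exact hy (by rwa [← e.injective hze])
  rw [hset, Set.ncard_image_of_injective _ (fun p q hpq => ?_)]
  have h1 : e p.1 = e q.1 := congrArg Prod.fst hpq
  have h2 : e p.2 = e q.2 := congrArg Prod.snd hpq
  exact Prod.ext (e.injective h1) (e.injective h2)

universe u

theorem core (c : ℝ) (hc : 0 ≤ c) :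
    ∀ (k : ℕ) (V : Fin k → Type u) [iV : ∀ i, Fintype (V i)]
      (G : ∀ i, SimpleGraph (V i)),
      (∀ i (T : Finset (V i)),
          c * min (T.card : ℝ) ((Fintype.card (V i) : ℝ) - T.card) ≤ bd (G i) T) →
      ∀ S : Finset (∀ i, V i),
        c / 2 * min (S.card : ℝ) ((Fintype.card (∀ i, V i) : ℝ) - S.card)
          ≤ bd (boxProdMany G) S := by
  intro k
  induction k with
  | zero =>
    intro V iV G hG S
    have hcard : Fintype.card (∀ i : Fin 0, V i) = 1 := by
      simp [Fintype.card_pi]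
    have hS1 : S.card ≤ 1 := by
      have := Finset.card_le_univ S
      omega
    have hmin : min (S.card : ℝ) ((Fintype.card (∀ i : Fin 0, V i) : ℝ) - S.card) ≤ 0 := by
      rw [hcard]
      interval_cases h : S.card <;> norm_num
    calc c / 2 * min (S.card : ℝ) ((Fintype.card (∀ i : Fin 0, V i) : ℝ) - S.card)
        ≤ c / 2 * 0 := by
          apply mul_le_mul_of_nonneg_left hmin (by linarith)
      _ = 0 := by ring
      _ ≤ bd (boxProdMany G) S := Nat.cast_nonneg _
  | succ k ih =>
    intro V iV G hG S
    classical
    set e := (Fin.insertNthEquiv V 0).symm with he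
    set V' : Fin k → Type u := fun j => V ((0 : Fin (k + 1)).succAbove j) with hV'
    set G' : ∀ j, SimpleGraph (V' j) := fun j => G ((0 : Fin (k + 1)).succAbove j) with hG'
    have happ : ∀ x : ∀ i, V i, e x = (x 0, fun j => x ((0 : Fin (k + 1)).succAbove j)) := by
      intro x; rw [he]; rfl
    have hadj : ∀ x y, (boxProdMany G).Adj x y ↔
        ((G 0) □ (boxProdMany G')).Adj (e x) (e y) := by
      intro x y
      rw [SimpleGraph.boxProd_adj, happ, happ]
      constructor
      · rintro ⟨i, hi, hj⟩
        rcases Fin.eq_zero_or_eq_succ i with rfl | ⟨m, rfl⟩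
        · left
          exact ⟨hi, funext fun j => hj _ (by rw [Fin.zero_succAbove]; exact Fin.succ_ne_zero j)⟩
        · right
          refine ⟨⟨m, ?_, ?_⟩, hj 0 (Ne.symm (Fin.succ_ne_zero m))⟩
          · show (G ((0 : Fin (k + 1)).succAbove m)).Adj (x _) (y _)
            rw [Fin.zero_succAbove]
            exact hi
          · intro j' hj'
            show x ((0 : Fin (k + 1)).succAbove j') = y ((0 : Fin (k + 1)).succAbove j')
            rw [Fin.zero_succAbove]
            exact hj _ (fun h => hj' (Fin.succ_inj.mp h))
      · rintro (⟨hadj0, heq⟩ | ⟨⟨m, hm, hj⟩, heq0⟩)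
        · refine ⟨0, hadj0, ?_⟩
          intro j hj0
          obtain ⟨m, rfl⟩ := Fin.eq_succ_of_ne_zero hj0
          have := congrFun heq m
          exact this
        · refine ⟨(0 : Fin (k + 1)).succAbove m, hm, ?_⟩
          intro j hjm
          rcases Fin.eq_zero_or_eq_succ j with rfl | ⟨m', rfl⟩
          · exact heq0
          · have hm' : m' ≠ m := by
              intro h
              apply hjm
              rw [h]
              exact (Fin.zero_succAbove m).symm
            have := hj m' hm'
            show x m'.succ = y m'.succ
            rw [← Fin.zero_succAbove m']
            exact this
    have hbd : bd (boxProdMany G) S = bd ((G 0) □ (boxProdMany G')) (S.image e) :=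
      bd_map e _ _ hadj S
    have hcardS : (S.image e).card = S.card := Finset.card_image_of_injective _ e.injective
    have hcardT : Fintype.card (∀ i, V i) = Fintype.card (V 0 × ∀ j, V' j) :=
      Fintype.card_congr e
    have h2 := ih V' G' (fun j T => hG ((0 : Fin (k + 1)).succAbove j) T)
    have := two_factor (G 0) (boxProdMany G') c hc (hG 0) h2 (S.image e)
    rw [hbd, hcardT]
    rwa [hcardS] at this

lemma expansion_nonneg {V : Type*} (G : SimpleGraph V) : 0 ≤ expansion G := by
  apply Real.sInf_nonneg
  rintro x ⟨S, _, _, rfl⟩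
  positivity

/-- The expansion of a Cartesian product of finite nonempty graphs is at least half the minimum
of the expansions of the factors: if `c ≤ h(Gᵢ)` for all `i`, then `c/2 ≤ h(G)`. -/
theorem expansion_boxProdMany (k : ℕ) (hk : 0 < k) (V : Fin k → Type*) [∀ i, Fintype (V i)]
    [∀ i, Nonempty (V i)] (G : ∀ i, SimpleGraph (V i)) (c : ℝ)
    (hc : ∀ i, c ≤ expansion (G i)) :
    c / 2 ≤ expansion (boxProdMany G) := by
  classical
  rcases le_or_gt c 0 with hc0 | hc0
  · have h0 : 0 ≤ expansion (boxProdMany G) := expansion_nonneg _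
    linarith
  have hfac : ∀ i (T : Finset (V i)), 2 * T.card ≤ Fintype.card (V i) →
      c * T.card ≤ bd (G i) T := by
    intro i T hT
    rcases Nat.eq_zero_or_pos T.card with h0 | h0
    · rw [h0]
      simpa using Nat.cast_nonneg (bd (G i) T)
    · have hne : (↑T : Set (V i)).Nonempty := by
        rw [Finset.coe_nonempty]
        exact Finset.card_pos.mp h0
      have hbdd : BddBelow {x : ℝ | ∃ S : Set (V i), S.Nonempty ∧ 2 * S.ncard ≤ Nat.card (V i) ∧
          x = (boundarySize (G i) S : ℝ) / (S.ncard : ℝ)} := by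
        refine ⟨0, ?_⟩
        rintro x ⟨S, _, _, rfl⟩
        positivity
      have hmem : (bd (G i) T : ℝ) / (T.card : ℝ) ∈ {x : ℝ | ∃ S : Set (V i), S.Nonempty ∧
          2 * S.ncard ≤ Nat.card (V i) ∧ x = (boundarySize (G i) S : ℝ) / (S.ncard : ℝ)} := by
        refine ⟨↑T, hne, ?_, ?_⟩
        · rw [Set.ncard_coe_finset, Nat.card_eq_fintype_card]
          exact hT
        · rw [Set.ncard_coe_finset,
            boundarySize_eq_bd (G i) (↑T) T (fun x => by simp)]
      have hle : expansion (G i) ≤ (bd (G i) T : ℝ) / (T.card : ℝ) := csInf_le hbdd hmem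
      have hcle := (hc i).trans hle
      rw [le_div_iff₀ (by exact_mod_cast h0 : (0 : ℝ) < T.card)] at hcle
      linarith
  have htwo : ∀ i (T : Finset (V i)),
      c * min (T.card : ℝ) ((Fintype.card (V i) : ℝ) - T.card) ≤ bd (G i) T :=
    fun i => bd_two_sided (G i) c (hfac i)
  have hcore := core c (le_of_lt hc0) k V G htwo
  have hNcard : Nat.card (∀ i, V i) = Fintype.card (∀ i, V i) := Nat.card_eq_fintype_card
  apply le_csInf
  · -- the defining set of the product expansion is nonempty
    by_cases hN2 : 2 ≤ Fintype.card (∀ i, V i)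
    · obtain ⟨x0⟩ : Nonempty (∀ i, V i) := inferInstance
      refine ⟨_, {x0}, Set.singleton_nonempty x0, ?_, rfl⟩
      rw [Set.ncard_singleton, hNcard]
      omega
    · exfalso
      push_neg at hN2
      have hprod : Fintype.card (∀ i, V i) = ∏ i, Fintype.card (V i) := Fintype.card_pi
      set i0 : Fin k := ⟨0, hk⟩
      have hone : Fintype.card (V i0) = 1 := by
        have hpos : ∀ i, 0 < Fintype.card (V i) := fun i => Fintype.card_pos
        have hdvd : Fintype.card (V i0) ∣ ∏ i, Fintype.card (V i) :=
          Finset.dvd_prod_of_mem _ (Finset.mem_univ i0)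
        have hple : ∏ i, Fintype.card (V i) ≤ 1 := by omega
        have hppos : 0 < ∏ i, Fintype.card (V i) := by
          rw [← hprod]; exact Fintype.card_pos
        have : ∏ i, Fintype.card (V i) = 1 := by omega
        rw [this] at hdvd
        have := Nat.le_of_dvd one_pos hdvd
        have := hpos i0
        omega
      have hempty : {x : ℝ | ∃ S : Set (V i0), S.Nonempty ∧ 2 * S.ncard ≤ Nat.card (V i0) ∧
          x = (boundarySize (G i0) S : ℝ) / (S.ncard : ℝ)} = ∅ := by
        ext x
        simp only [Set.mem_setOf_eq, Set.mem_empty_iff_false, iff_false]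
        rintro ⟨S, hSne, hScard, _⟩
        have h1 : 0 < S.ncard := (Set.ncard_pos S.toFinite).mpr hSne
        rw [Nat.card_eq_fintype_card, hone] at hScard
        omega
      have hzero : expansion (G i0) = 0 := by
        rw [expansion, hempty, Real.sInf_empty]
      have := hc i0
      rw [hzero] at this
      linarith
  · rintro x ⟨S, hSne, hScard, rfl⟩
    have hfin : S.Finite := S.toFinite
    set T := hfin.toFinset with hTdef
    have hTS : S.ncard = T.card := by
      rw [hTdef, Set.ncard_eq_toFinset_card]
    have hBS : boundarySize (boxProdMany G) S = bd (boxProdMany G) T :=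
      boundarySize_eq_bd _ S T (fun x => hfin.mem_toFinset)
    have hTpos : 0 < T.card := by
      rw [← hTS]
      exact (Set.ncard_pos hfin).mpr hSne
    rw [hBS, hTS]
    rw [le_div_iff₀ (by exact_mod_cast hTpos : (0 : ℝ) < T.card)]
    have hmin : min (T.card : ℝ) ((Fintype.card (∀ i, V i) : ℝ) - T.card) = (T.card : ℝ) := by
      apply min_eq_left
      rw [hNcard, hTS] at hScard
      have : (2 * T.card : ℝ) ≤ (Fintype.card (∀ i, V i) : ℝ) := by exact_mod_cast hScard
      linarith
    have := hcore T
    rw [hmin] at this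
    linarith
end

section
/- There exist constants c > 0 and N such that for all n >= N and all distinct central diagonals D, D' of the regular (2n+2)-gon, |E(D, D')| / |Psi(D)| <= c / d(D, D')^{3/2}, where d(D, D') in [1, (n+1)/2] is determined by the property that the rectangle with diagonals D and D' cuts the polygon into two (d+1)-gons and two (n-d+2)-gons. -/
open scoped BigOperators

/-- `x` lies strictly inside the (clockwise) arc from `a` to `b` of the regular `m`-gon,
whose vertices are labeled by `ZMod m`. -/
def arcMem (m : ℕ) (a b x : ZMod m) : Prop :=
  0 < (x - a).val ∧ (x - a).val < (b - a).val

/-- Ordered version of the crossing predicate for the chords `{a,b}` and `{c,d}`: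
exactly one of `c, d` lies strictly inside the open arc from `a` to `b`. -/
def crossPairs (m : ℕ) (a b c d : ZMod m) : Prop :=
  (arcMem m a b c ∧ arcMem m b a d) ∨ (arcMem m a b d ∧ arcMem m b a c)

/-- Two chords of the convex `m`-gon cross (in their interiors). -/
def Crosses (m : ℕ) (e f : Sym2 (ZMod m)) : Prop :=
  ∃ a b c d : ZMod m, e = s(a, b) ∧ f = s(c, d) ∧ crossPairs m a b c d

/-- `e` is a diagonal of the convex `m`-gon: its endpoints are distinct and non-adjacent. -/
def IsDiagonal (m : ℕ) (e : Sym2 (ZMod m)) : Prop :=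
  ∃ a b : ZMod m, e = s(a, b) ∧ a ≠ b ∧ b ≠ a + 1 ∧ a ≠ b + 1

/-- A triangulation of the convex `m`-gon: a maximal set of pairwise non-crossing diagonals. -/
def IsTriangulation (m : ℕ) (T : Finset (Sym2 (ZMod m))) : Prop :=
  (∀ e ∈ T, IsDiagonal m e) ∧
  (∀ e ∈ T, ∀ f ∈ T, ¬ Crosses m e f) ∧
  (∀ e, IsDiagonal m e → e ∉ T → ∃ f ∈ T, Crosses m e f)

/-- A diagonal of the regular `(2n+2)`-gon is central if it joins two opposite vertices,
i.e. passes through the center of the polygon. -/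
def IsCentral (n : ℕ) (e : Sym2 (ZMod (2 * n + 2))) : Prop :=
  ∃ a : ZMod (2 * n + 2), e = s(a, a + (n : ZMod (2 * n + 2)) + 1)

/-- The central diagonal of the regular `(2n+2)`-gon with endpoint `a`. -/
def centralDiag (n : ℕ) (a : ZMod (2 * n + 2)) : Sym2 (ZMod (2 * n + 2)) :=
  s(a, a + (n : ZMod (2 * n + 2)) + 1)

/-- A centrally-symmetric triangulation of the regular `(2n+2)`-gon: a triangulation invariant
under 180-degree rotation, i.e. under adding `n+1` to every vertex label. -/
def CSTriangulation (n : ℕ) (T : Finset (Sym2 (ZMod (2 * n + 2)))) : Prop :=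
  IsTriangulation (2 * n + 2) T ∧
  ∀ e ∈ T, Sym2.map (· + ((n : ZMod (2 * n + 2)) + 1)) e ∈ T

namespace TypeB

/-- offset chord -/
def och {m : ℕ} (p : ZMod m) (i j : ℕ) : Sym2 (ZMod m) := s(p + (i : ZMod m), p + (j : ZMod m))

variable {m : ℕ}

lemma cast_inj_of_lt {i j : ℕ} (hi : i < m) (hj : j < m) :
    ((i : ZMod m) = (j : ZMod m)) ↔ i = j := by
  constructor
  · intro h
    have := congrArg ZMod.val h
    rwa [ZMod.val_natCast, ZMod.val_natCast, Nat.mod_eq_of_lt hi, Nat.mod_eq_of_lt hj] at this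
  · rintro rfl; rfl

lemma add_cast_inj (p : ZMod m) {i j : ℕ} (hi : i < m) (hj : j < m) :
    p + (i : ZMod m) = p + (j : ZMod m) ↔ i = j := by
  rw [add_right_inj, cast_inj_of_lt hi hj]

/-- the clockwise distance function on offsets -/
def dd (m a b : ℕ) : ℕ := if a ≤ b then b - a else m - (a - b)

lemma val_sub_off (p : ZMod m) {α γ : ℕ} (hα : α < m) (hγ : γ < m) :
    ((p + (γ : ZMod m)) - (p + (α : ZMod m))).val = dd m α γ := by
  have hm : 0 < m := lt_of_le_of_lt (Nat.zero_le _) hα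
  have h1 : (p + (γ : ZMod m)) - (p + (α : ZMod m)) = ((γ + (m - α) : ℕ) : ZMod m) := by
    push_cast
    rw [Nat.cast_sub hα.le, ZMod.natCast_self]
    ring
  rw [h1, ZMod.val_natCast, dd]
  split_ifs with h
  · have h2 : γ + (m - α) = (γ - α) + m := by omega
    rw [h2, Nat.add_mod_right, Nat.mod_eq_of_lt (by omega)]
  · rw [Nat.mod_eq_of_lt (by omega)]
    omega

lemma arcMem_off (p : ZMod m) {α β γ : ℕ} (hα : α < m) (hβ : β < m) (hγ : γ < m) :
    arcMem m (p + (α : ZMod m)) (p + (β : ZMod m)) (p + (γ : ZMod m)) ↔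
      (0 < dd m α γ ∧ dd m α γ < dd m α β) := by
  rw [arcMem, val_sub_off p hα hγ, val_sub_off p hα hβ]

lemma crossPairs_comm_left {a b c d : ZMod m} :
    crossPairs m a b c d ↔ crossPairs m b a c d := by
  unfold crossPairs; tauto

lemma crossPairs_comm_right {a b c d : ZMod m} :
    crossPairs m a b c d ↔ crossPairs m a b d c := by
  unfold crossPairs; tauto

lemma crossPairs_off (p : ZMod m) {α β γ δ : ℕ} (hα : α < m) (hβ : β < m) (hγ : γ < m)
    (hδ : δ < m) :
    crossPairs m (p + (α : ZMod m)) (p + (β : ZMod m)) (p + (γ : ZMod m)) (p + (δ : ZMod m)) ↔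
      (((0 < dd m α γ ∧ dd m α γ < dd m α β) ∧ (0 < dd m β δ ∧ dd m β δ < dd m β α)) ∨
       ((0 < dd m α δ ∧ dd m α δ < dd m α β) ∧ (0 < dd m β γ ∧ dd m β γ < dd m β α))) := by
  unfold crossPairs
  rw [arcMem_off p hα hβ hγ, arcMem_off p hβ hα hδ, arcMem_off p hα hβ hδ,
    arcMem_off p hβ hα hγ]

lemma crosses_och_iff (p : ZMod m) {i j u v : ℕ}
    (hij : i < j) (hj : j < m) (huv : u < v) (hv : v < m) :
    Crosses m (och p i j) (och p u v) ↔
      ((i < u ∧ u < j ∧ j < v) ∨ (u < i ∧ i < v ∧ v < j)) := by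
  have hi : i < m := lt_trans hij hj
  have hu : u < m := lt_trans huv hv
  constructor
  · rintro ⟨a, b, c, d, he, hf, hcp⟩
    rw [och, Sym2.eq_iff] at he hf
    have hcp' : crossPairs m (p + (i : ZMod m)) (p + (j : ZMod m))
        (p + (u : ZMod m)) (p + (v : ZMod m)) := by
      rcases he with ⟨rfl, rfl⟩ | ⟨rfl, rfl⟩ <;> rcases hf with ⟨rfl, rfl⟩ | ⟨rfl, rfl⟩
      · exact hcp
      · exact crossPairs_comm_right.mpr hcp
      · exact crossPairs_comm_left.mpr hcp
      · exact crossPairs_comm_left.mpr (crossPairs_comm_right.mpr hcp)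
    rw [crossPairs_off p hi hj hu hv] at hcp'
    unfold dd at hcp'
    split_ifs at hcp' <;> omega
  · intro h
    refine ⟨_, _, _, _, rfl, rfl, ?_⟩
    rw [crossPairs_off p hi hj hu hv]
    unfold dd
    split_ifs <;> omega

lemma och_eq_och_iff (p : ZMod m) {i j u v : ℕ} (hi : i < m) (hj : j < m) (hu : u < m)
    (hv : v < m) : och p i j = och p u v ↔ ((i = u ∧ j = v) ∨ (i = v ∧ j = u)) := by
  rw [och, och, Sym2.eq_iff, add_cast_inj p hi hu, add_cast_inj p hj hv,
    add_cast_inj p hi hv, add_cast_inj p hj hu]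

lemma mod_eq_sub_of_lt {x : ℕ} (h1 : m ≤ x) (h2 : x < 2 * m) : x % m = x - m := by
  rw [Nat.mod_eq_sub_mod h1, Nat.mod_eq_of_lt (by omega)]

lemma isDiagonal_och_iff (p : ZMod m) {i j : ℕ} (hij : i < j) (hj : j < m) :
    IsDiagonal m (och p i j) ↔ (i + 2 ≤ j ∧ j + 2 ≤ i + m) := by
  have hi : i < m := lt_trans hij hj
  have hm : 0 < m := lt_of_le_of_lt (Nat.zero_le _) hj
  have key : ∀ α β : ℕ, α < m → β < m →
      (p + (β : ZMod m) = p + (α : ZMod m) + 1 ↔ (α + 1) % m = β) := by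
    intro α β hα hβ
    have h1 : p + (α : ZMod m) + 1 = p + (((α + 1) % m : ℕ) : ZMod m) := by
      rw [ZMod.natCast_mod]; push_cast; ring
    rw [h1, add_cast_inj p hβ (Nat.mod_lt _ hm), eq_comm]
  constructor
  · rintro ⟨a, b, he, hab, hba1, hab1⟩
    rw [och, Sym2.eq_iff] at he
    rcases he with ⟨rfl, rfl⟩ | ⟨rfl, rfl⟩
    · rw [ne_eq, key i j hi hj] at hba1
      rw [ne_eq, key j i hj hi] at hab1
      rcases Nat.lt_or_ge (i + 1) m with h | h
      · rw [Nat.mod_eq_of_lt h] at hba1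
        rcases Nat.lt_or_ge (j + 1) m with h' | h'
        · rw [Nat.mod_eq_of_lt h'] at hab1; omega
        · rw [mod_eq_sub_of_lt h' (by omega)] at hab1; omega
      · omega
    · rw [ne_eq, key j i hj hi] at hba1
      rw [ne_eq, key i j hi hj] at hab1
      rcases Nat.lt_or_ge (j + 1) m with h | h
      · rw [Nat.mod_eq_of_lt h] at hba1
        rcases Nat.lt_or_ge (i + 1) m with h' | h'
        · rw [Nat.mod_eq_of_lt h'] at hab1; omega
        · rw [mod_eq_sub_of_lt h' (by omega)] at hab1; omega
      · rw [mod_eq_sub_of_lt h (by omega)] at hba1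
        rcases Nat.lt_or_ge (i + 1) m with h' | h'
        · rw [Nat.mod_eq_of_lt h'] at hab1; omega
        · rw [mod_eq_sub_of_lt h' (by omega)] at hab1; omega
  · rintro ⟨h2, h2'⟩
    refine ⟨p + (i : ZMod m), p + (j : ZMod m), rfl, ?_, ?_, ?_⟩
    · rw [Ne, add_cast_inj p hi hj]; omega
    · rw [Ne, key i j hi hj]
      rcases Nat.lt_or_ge (i + 1) m with h | h
      · rw [Nat.mod_eq_of_lt h]; omega
      · rw [mod_eq_sub_of_lt h (by omega)]; omega
    · rw [Ne, key j i hj hi]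
      rcases Nat.lt_or_ge (j + 1) m with h | h
      · rw [Nat.mod_eq_of_lt h]; omega
      · rw [mod_eq_sub_of_lt h (by omega)]; omega

/-- every Sym2 element has a sorted offset representation relative to any base point -/
lemma exists_och_repr (hm : 0 < m) (p : ZMod m) (e : Sym2 (ZMod m)) :
    ∃ i j : ℕ, i ≤ j ∧ j < m ∧ e = och p i j := by
  haveI : NeZero m := ⟨hm.ne'⟩
  induction e using Sym2.inductionOn with
  | hf a b =>
    have ha : a = p + (((a - p).val : ℕ) : ZMod m) := by
      rw [ZMod.natCast_val, ZMod.cast_id]; ring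
    have hb : b = p + (((b - p).val : ℕ) : ZMod m) := by
      rw [ZMod.natCast_val, ZMod.cast_id]; ring
    rcases le_or_gt (a - p).val (b - p).val with h | h
    · refine ⟨(a - p).val, (b - p).val, h, ZMod.val_lt _, ?_⟩
      rw [och]; nth_rewrite 1 [ha]; nth_rewrite 1 [hb]; rfl
    · refine ⟨(b - p).val, (a - p).val, h.le, ZMod.val_lt _, ?_⟩
      rw [och, Sym2.eq_swap]; nth_rewrite 1 [ha]; nth_rewrite 1 [hb]; rfl

end TypeB

open scoped Classical

namespace TypeB

variable {m : ℕ}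

/-- `e` is a chord of the arc `p, p+1, ..., p+k`, other than the closing chord `(0,k)`. -/
def IsArcChord (m : ℕ) (p : ZMod m) (k : ℕ) (e : Sym2 (ZMod m)) : Prop :=
  ∃ i j : ℕ, i + 2 ≤ j ∧ j ≤ k ∧ ¬(i = 0 ∧ j = k) ∧ e = och p i j

/-- A triangulation of the arc polygon. -/
def ArcTri (m : ℕ) (p : ZMod m) (k : ℕ) (T : Finset (Sym2 (ZMod m))) : Prop :=
  (∀ e ∈ T, IsArcChord m p k e) ∧
  (∀ e ∈ T, ∀ f ∈ T, ¬ Crosses m e f) ∧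
  (∀ e, IsArcChord m p k e → e ∉ T → ∃ f ∈ T, Crosses m e f)

lemma och_shift (p : ZMod m) (q i j : ℕ) :
    och (p + (q : ZMod m)) i j = och p (q + i) (q + j) := by
  simp [och, add_assoc]

def Apex (m : ℕ) (p : ZMod m) (k : ℕ) (T : Finset (Sym2 (ZMod m))) (q : ℕ) : Prop :=
  1 ≤ q ∧ q + 1 ≤ k ∧ (q = 1 ∨ och p 0 q ∈ T) ∧ (q + 1 = k ∨ och p q k ∈ T)

section Core

variable {p : ZMod m} {k : ℕ} {T : Finset (Sym2 (ZMod m))}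

lemma apex_exists (hm : 0 < m) (hk : 2 * k ≤ m) (hk2 : 2 ≤ k) (hT : ArcTri m p k T) :
    ∃ q, Apex m p k T q := by
  have hkm : k < m := by omega
  set P : ℕ → Prop := fun i => 1 ≤ i ∧ (i = 1 ∨ och p 0 i ∈ T) with hP
  have hP1 : P 1 := ⟨le_refl _, Or.inl rfl⟩
  set q := Nat.findGreatest P (k - 1) with hq
  have hq1 : 1 ≤ q := Nat.le_findGreatest (by omega) hP1
  have hqk : q ≤ k - 1 := Nat.findGreatest_le _
  have hPq : P q := Nat.findGreatest_spec (m := 1) (by omega) hP1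
  have hmax : ∀ r, q < r → r ≤ k - 1 → ¬ P r := fun r h1 h2 =>
    Nat.findGreatest_is_greatest h1 h2
  refine ⟨q, hq1, by omega, hPq.2, ?_⟩
  by_cases hqe : q + 1 = k
  · exact Or.inl hqe
  right
  by_contra hno
  have hchord : IsArcChord m p k (och p q k) := ⟨q, k, by omega, le_refl _, by omega, rfl⟩
  obtain ⟨f, hfT, hcross⟩ := hT.2.2 _ hchord hno
  obtain ⟨u, v, huv2, hvk, hncl, rfl⟩ := hT.1 f hfT
  rw [crosses_och_iff p (by omega) hkm (by omega) (by omega)] at hcross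
  -- patterns: q<u<k<v (impossible) or u<q<v<k
  have huqvk : u < q ∧ q < v ∧ v < k := by omega
  by_cases hu0 : u = 0
  · subst hu0
    exact hmax v (by omega) (by omega) ⟨by omega, Or.inr hfT⟩
  · -- u ≥ 1, so q ≥ 2, and och p 0 q ∈ T crosses f
    have hq2 : 2 ≤ q := by omega
    have h0q : och p 0 q ∈ T := hPq.2.resolve_left (by omega)
    refine hT.2.1 _ h0q _ hfT ?_
    rw [crosses_och_iff p (by omega) (by omega) (by omega) (by omega)]
    omega

lemma apex_unique (hm : 0 < m) (hk : 2 * k ≤ m) (hT : ArcTri m p k T) {q q' : ℕ}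
    (h1 : Apex m p k T q) (h2 : Apex m p k T q') : q = q' := by
  have hkm : k < m := by omega
  by_contra hne
  wlog hlt : q < q' generalizing q q'
  · exact this h2 h1 (Ne.symm hne) (by omega)
  obtain ⟨ha1, ha2, ha3, ha4⟩ := h1
  obtain ⟨hb1, hb2, hb3, hb4⟩ := h2
  have hq'2 : 2 ≤ q' := by omega
  have h0q' : och p 0 q' ∈ T := hb3.resolve_left (by omega)
  have hqk : och p q k ∈ T := ha4.resolve_left (by omega)
  refine hT.2.1 _ h0q' _ hqk ?_
  rw [crosses_och_iff p (show (0:ℕ) < q' by omega) (show q' < m by omega) (show q < k by omega)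
    hkm]
  omega

end Core

end TypeB

namespace TypeB

variable {m : ℕ}

def apexSet (m : ℕ) (p : ZMod m) (k q : ℕ) : Finset (Sym2 (ZMod m)) :=
  (if 2 ≤ q then {och p 0 q} else ∅) ∪ (if q + 2 ≤ k then {och p q k} else ∅)

def glueSet (m : ℕ) (p : ZMod m) (k q : ℕ) (T₁ T₂ : Finset (Sym2 (ZMod m))) :
    Finset (Sym2 (ZMod m)) :=
  T₁ ∪ T₂ ∪ apexSet m p k q

section Core

variable {p : ZMod m} {k q : ℕ} {T T₁ T₂ : Finset (Sym2 (ZMod m))}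

lemma isArcChord_sub₁ (hqk : q ≤ k) (hq : q < k ∨ True) {e : Sym2 (ZMod m)}
    (h : IsArcChord m p q e) (hqk' : q < k) : IsArcChord m p k e := by
  obtain ⟨i, j, h2, hjq, hncl, rfl⟩ := h
  exact ⟨i, j, h2, by omega, by omega, rfl⟩

lemma isArcChord_sub₂ {e : Sym2 (ZMod m)} (hq : 1 ≤ q) (hqk : q ≤ k)
    (h : IsArcChord m (p + (q : ZMod m)) (k - q) e) : IsArcChord m p k e := by
  obtain ⟨i, j, h2, hjq, hncl, rfl⟩ := h
  rw [och_shift]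
  exact ⟨q + i, q + j, by omega, by omega, by omega, rfl⟩

/-- Restriction of an arc triangulation to the first sub-arc of its apex. -/
lemma restrict₁ (hm : 0 < m) (hk : 2 * k ≤ m) (hT : ArcTri m p k T)
    (hq : Apex m p k T q) : ArcTri m p q (T.filter (IsArcChord m p q)) := by
  have hkm : k < m := by omega
  obtain ⟨hq1, hqk, hq3, hq4⟩ := hq
  refine ⟨fun e he => (Finset.mem_filter.mp he).2,
    fun e he f hf => hT.2.1 e (Finset.mem_filter.mp he).1 f (Finset.mem_filter.mp hf).1,
    fun e hch hnot => ?_⟩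
  obtain ⟨i, j, hij2, hjq, hncl, rfl⟩ := hch
  have hnotT : och p i j ∉ T := fun h =>
    hnot (Finset.mem_filter.mpr ⟨h, ⟨i, j, hij2, hjq, hncl, rfl⟩⟩)
  obtain ⟨f, hfT, hcross⟩ := hT.2.2 _ ⟨i, j, hij2, by omega, by omega, rfl⟩ hnotT
  obtain ⟨u, v, huv2, hvk, hnclf, rfl⟩ := hT.1 f hfT
  rw [crosses_och_iff p (by omega) (by omega) (by omega) (by omega)] at hcross
  refine ⟨och p u v, Finset.mem_filter.mpr ⟨hfT, ⟨u, v, huv2, ?_, ?_, rfl⟩⟩, ?_⟩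
  · -- v ≤ q
    by_contra hvq
    -- then u < q < v (from crossing patterns, j ≤ q), so f crosses the apex chord (0,q)
    have hq2 : 2 ≤ q := by omega
    have h0q : och p 0 q ∈ T := hq3.resolve_left (by omega)
    refine hT.2.1 _ h0q _ hfT ?_
    rw [crosses_och_iff p (by omega) (by omega) (by omega) (by omega)]
    omega
  · -- not the closing chord (0,q) : it cannot cross e since e ⊆ [0,q]
    omega
  · rw [crosses_och_iff p (by omega) (by omega) (by omega) (by omega)]
    omega

/-- Restriction of an arc triangulation to the second sub-arc of its apex. -/
lemma restrict₂ (hm : 0 < m) (hk : 2 * k ≤ m) (hT : ArcTri m p k T)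
    (hq : Apex m p k T q) :
    ArcTri m (p + (q : ZMod m)) (k - q) (T.filter (IsArcChord m (p + (q : ZMod m)) (k - q))) := by
  have hkm : k < m := by omega
  obtain ⟨hq1, hqk, hq3, hq4⟩ := hq
  refine ⟨fun e he => (Finset.mem_filter.mp he).2,
    fun e he f hf => hT.2.1 e (Finset.mem_filter.mp he).1 f (Finset.mem_filter.mp hf).1,
    fun e hch hnot => ?_⟩
  obtain ⟨i, j, hij2, hjq, hncl, he⟩ := hch
  subst he
  rw [och_shift] at hnot ⊢
  have hnotT : och p (q + i) (q + j) ∉ T := fun h =>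
    hnot (Finset.mem_filter.mpr ⟨h, ⟨i, j, hij2, hjq, hncl, (och_shift p q i j).symm⟩⟩)
  obtain ⟨f, hfT, hcross⟩ := hT.2.2 _ ⟨q + i, q + j, by omega, by omega, by omega, rfl⟩ hnotT
  obtain ⟨u, v, huv2, hvk, hnclf, rfl⟩ := hT.1 f hfT
  rw [crosses_och_iff p (by omega) (by omega) (by omega) (by omega)] at hcross
  have huq : q ≤ u := by
    -- otherwise u < q < v and f crosses the apex chord (q,k)
    by_contra huq
    have hqk2 : q + 2 ≤ k := by omega
    have hqkT : och p q k ∈ T := hq4.resolve_left (by omega)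
    refine hT.2.1 _ hqkT _ hfT ?_
    rw [crosses_och_iff p (by omega) (by omega) (by omega) (by omega)]
    omega
  have hrep : och p u v = och (p + (q : ZMod m)) (u - q) (v - q) := by
    rw [och_shift]
    congr 1 <;> omega
  refine ⟨och p u v, Finset.mem_filter.mpr ⟨hfT, ?_⟩, ?_⟩
  · rw [hrep]
    exact ⟨u - q, v - q, by omega, by omega, by omega, rfl⟩
  · rw [crosses_och_iff p (by omega) (by omega) (by omega) (by omega)]
    omega

/-- Every chord of an arc triangulation lies in one of the two sub-arcs of the apex,
or is an apex chord. -/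
lemma decomp (hm : 0 < m) (hk : 2 * k ≤ m) (hT : ArcTri m p k T) (hq : Apex m p k T q) :
    T = glueSet m p k q (T.filter (IsArcChord m p q))
      (T.filter (IsArcChord m (p + (q : ZMod m)) (k - q))) := by
  have hkm : k < m := by omega
  obtain ⟨hq1, hqk, hq3, hq4⟩ := hq
  ext f
  constructor
  · intro hfT
    obtain ⟨u, v, huv2, hvk, hnclf, rfl⟩ := hT.1 f hfT
    simp only [glueSet, apexSet, Finset.mem_union, Finset.mem_filter]
    by_cases hv : v ≤ q
    · by_cases hcl : u = 0 ∧ v = q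
      · right; left
        rw [if_pos (by omega)]
        simp only [Finset.mem_union, Finset.mem_singleton]
        rw [och_eq_och_iff p (by omega) (by omega) (by omega) (by omega)]
        omega
      · exact Or.inl (Or.inl ⟨hfT, ⟨u, v, huv2, hv, hcl, rfl⟩⟩)
    by_cases hu : q ≤ u
    · by_cases hcl : u = q ∧ v = k
      · right; right
        rw [if_pos (by omega)]
        simp only [Finset.mem_union, Finset.mem_singleton]
        rw [och_eq_och_iff p (by omega) (by omega) (by omega) (by omega)]
        omega
      · refine Or.inl (Or.inr ⟨hfT, ?_⟩)
        have hrep : och p u v = och (p + (q : ZMod m)) (u - q) (v - q) := by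
          rw [och_shift]; congr 1 <;> omega
        rw [hrep]
        exact ⟨u - q, v - q, by omega, by omega, by omega, rfl⟩
    · -- u < q < v : crossing contradiction
      exfalso
      by_cases hu0 : u = 0
      · -- f = (0,v), q < v < k, crosses (q,k) ∈ T
        have hqkT : och p q k ∈ T := hq4.resolve_left (by omega)
        refine hT.2.1 _ hfT _ hqkT ?_
        rw [crosses_och_iff p (by omega) (by omega) (by omega) (by omega)]
        omega
      · have h0qT : och p 0 q ∈ T := hq3.resolve_left (by omega)
        refine hT.2.1 _ hfT _ h0qT ?_
        rw [crosses_och_iff p (by omega) (by omega) (by omega) (by omega)]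
        omega
  · intro hf
    simp only [glueSet, apexSet, Finset.mem_union, Finset.mem_filter] at hf
    rcases hf with (⟨h, _⟩ | ⟨h, _⟩) | h | h
    · exact h
    · exact h
    · split_ifs at h with h2
      · rw [Finset.mem_singleton] at h
        subst h
        exact hq3.resolve_left (by omega)
      · exact absurd h (Finset.notMem_empty _)
    · split_ifs at h with h2
      · rw [Finset.mem_singleton] at h
        subst h
        exact hq4.resolve_left (by omega)
      · exact absurd h (Finset.notMem_empty _)

end Core

end TypeB

namespace TypeB

variable {m : ℕ}

section Core

variable {p : ZMod m} {k q : ℕ} {T T₁ T₂ : Finset (Sym2 (ZMod m))}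

lemma mem_apexSet {e : Sym2 (ZMod m)} :
    e ∈ apexSet m p k q ↔ (2 ≤ q ∧ e = och p 0 q) ∨ (q + 2 ≤ k ∧ e = och p q k) := by
  simp only [apexSet, Finset.mem_union]
  constructor
  · rintro (h | h) <;> split_ifs at h with h2 <;>
      simp only [Finset.mem_singleton, Finset.notMem_empty] at h
    · exact Or.inl ⟨h2, h⟩
    · exact Or.inr ⟨h2, h⟩
  · rintro (⟨h2, rfl⟩ | ⟨h2, rfl⟩)
    · left; rw [if_pos h2]; exact Finset.mem_singleton_self _
    · right; rw [if_pos h2]; exact Finset.mem_singleton_self _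

/-- normalized representation of elements of the glued set -/
lemma glue_rep (hm : 0 < m) (hk : 2 * k ≤ m) (hq1 : 1 ≤ q) (hqk : q + 1 ≤ k)
    (h₁ : ArcTri m p q T₁) (h₂ : ArcTri m (p + (q : ZMod m)) (k - q) T₂)
    {e : Sym2 (ZMod m)} (he : e ∈ glueSet m p k q T₁ T₂) :
    ∃ u v, u + 2 ≤ v ∧ v ≤ k ∧ ¬(u = 0 ∧ v = k) ∧ (v ≤ q ∨ q ≤ u) ∧ e = och p u v := by
  simp only [glueSet, Finset.mem_union, mem_apexSet] at he
  rcases he with (he | he) | (⟨h2, rfl⟩ | ⟨h2, rfl⟩)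
  · obtain ⟨u, v, h2, hvq, hncl, rfl⟩ := h₁.1 e he
    exact ⟨u, v, h2, by omega, by omega, by omega, rfl⟩
  · obtain ⟨i, j, h2, hvq, hncl, rfl⟩ := h₂.1 e he
    rw [och_shift]
    exact ⟨q + i, q + j, by omega, by omega, by omega, by omega, rfl⟩
  · exact ⟨0, q, by omega, by omega, by omega, by omega, rfl⟩
  · exact ⟨q, k, by omega, by omega, by omega, by omega, rfl⟩

lemma glue_arcTri (hm : 0 < m) (hk : 2 * k ≤ m) (hq1 : 1 ≤ q) (hqk : q + 1 ≤ k)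
    (h₁ : ArcTri m p q T₁) (h₂ : ArcTri m (p + (q : ZMod m)) (k - q) T₂) :
    ArcTri m p k (glueSet m p k q T₁ T₂) := by
  have hkm : k < m := by omega
  refine ⟨?_, ?_, ?_⟩
  · -- chord condition
    intro e he
    obtain ⟨u, v, h2, hvk, hncl, _, rfl⟩ := glue_rep hm hk hq1 hqk h₁ h₂ he
    exact ⟨u, v, h2, hvk, hncl, rfl⟩
  · -- noncrossing
    intro e he f hf
    simp only [glueSet, Finset.mem_union, mem_apexSet] at he hf
    -- both genuinely in T₁ : use h₁ ; both in T₂ : use h₂ ; otherwise regions are disjoint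
    rcases he with (he | he) | he
    · rcases hf with (hf | hf) | hf
      · exact h₁.2.1 e he f hf
      · -- e ∈ T₁ (region [0,q]), f ∈ T₂ (region [q,k])
        obtain ⟨u, v, h2, hvq, hncl, rfl⟩ := h₁.1 e he
        obtain ⟨i, j, h2', hjq, hncl', rfl⟩ := h₂.1 f hf
        rw [och_shift]
        rw [crosses_och_iff p (by omega) (by omega) (by omega) (by omega)]
        omega
      · obtain ⟨u, v, h2, hvq, hncl, rfl⟩ := h₁.1 e he
        rcases hf with ⟨hq2, rfl⟩ | ⟨hq2, rfl⟩ <;>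
          rw [crosses_och_iff p (by omega) (by omega) (by omega) (by omega)] <;> omega
    · rcases hf with (hf | hf) | hf
      · obtain ⟨i, j, h2', hjq, hncl', rfl⟩ := h₂.1 e he
        obtain ⟨u, v, h2, hvq, hncl, rfl⟩ := h₁.1 f hf
        rw [och_shift]
        rw [crosses_och_iff p (by omega) (by omega) (by omega) (by omega)]
        omega
      · exact h₂.2.1 e he f hf
      · obtain ⟨i, j, h2', hjq, hncl', rfl⟩ := h₂.1 e he
        rw [och_shift]
        rcases hf with ⟨hq2, rfl⟩ | ⟨hq2, rfl⟩ <;>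
          rw [crosses_och_iff p (by omega) (by omega) (by omega) (by omega)] <;> omega
    · rcases hf with (hf | hf) | hf
      · obtain ⟨u, v, h2, hvq, hncl, rfl⟩ := h₁.1 f hf
        rcases he with ⟨hq2, rfl⟩ | ⟨hq2, rfl⟩ <;>
          rw [crosses_och_iff p (by omega) (by omega) (by omega) (by omega)] <;> omega
      · obtain ⟨i, j, h2', hjq, hncl', rfl⟩ := h₂.1 f hf
        rw [och_shift]
        rcases he with ⟨hq2, rfl⟩ | ⟨hq2, rfl⟩ <;>
          rw [crosses_och_iff p (by omega) (by omega) (by omega) (by omega)] <;> omega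
      · rcases he with ⟨hq2, rfl⟩ | ⟨hq2, rfl⟩ <;> rcases hf with ⟨hq2', rfl⟩ | ⟨hq2', rfl⟩ <;>
          rw [crosses_och_iff p (by omega) (by omega) (by omega) (by omega)] <;> omega
  · -- maximality
    intro e hch hnot
    obtain ⟨i, j, hij2, hjk, hncl, rfl⟩ := hch
    by_cases hj : j ≤ q
    · -- chord of sub-arc 1, or the closing chord (0,q)
      by_cases hcl : i = 0 ∧ j = q
      · exfalso
        apply hnot
        simp only [glueSet, Finset.mem_union, mem_apexSet]
        right
        left
        refine ⟨by omega, ?_⟩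
        rw [och_eq_och_iff p (by omega) (by omega) (by omega) (by omega)]
        omega
      · have hnot₁ : och p i j ∉ T₁ := fun h => hnot (by
          simp only [glueSet, Finset.mem_union]; exact Or.inl (Or.inl h))
        obtain ⟨f, hf, hcr⟩ := h₁.2.2 _ ⟨i, j, hij2, hj, hcl, rfl⟩ hnot₁
        exact ⟨f, by simp only [glueSet, Finset.mem_union]; exact Or.inl (Or.inl hf), hcr⟩
    by_cases hi : q ≤ i
    · by_cases hcl : i = q ∧ j = k
      · exfalso
        apply hnot
        simp only [glueSet, Finset.mem_union, mem_apexSet]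
        right
        right
        refine ⟨by omega, ?_⟩
        rw [och_eq_och_iff p (by omega) (by omega) (by omega) (by omega)]
        omega
      · have hrep : och p i j = och (p + (q : ZMod m)) (i - q) (j - q) := by
          rw [och_shift]; congr 1 <;> omega
        have hnot₂ : och (p + (q : ZMod m)) (i - q) (j - q) ∉ T₂ := fun h => hnot (by
          simp only [glueSet, Finset.mem_union]; exact Or.inl (Or.inr (hrep ▸ h)))
        obtain ⟨f, hf, hcr⟩ := h₂.2.2 _ ⟨i - q, j - q, by omega, by omega, by omega, rfl⟩ hnot₂
        refine ⟨f, by simp only [glueSet, Finset.mem_union]; exact Or.inl (Or.inr hf), ?_⟩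
        rw [hrep]
        exact hcr
    · -- i < q < j : crosses an apex chord
      by_cases hi0 : i = 0
      · -- e = (0,j), q < j < k, crosses (q,k)
        refine ⟨och p q k, ?_, ?_⟩
        · simp only [glueSet, Finset.mem_union, mem_apexSet]
          exact Or.inr (Or.inr ⟨by omega, trivial⟩)
        · rw [crosses_och_iff p (by omega) (by omega) (by omega) (by omega)]
          omega
      · refine ⟨och p 0 q, ?_, ?_⟩
        · simp only [glueSet, Finset.mem_union, mem_apexSet]
          exact Or.inr (Or.inl ⟨by omega, trivial⟩)
        · rw [crosses_och_iff p (by omega) (by omega) (by omega) (by omega)]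
          omega

lemma glue_apex (hm : 0 < m) (hk : 2 * k ≤ m) (hq1 : 1 ≤ q) (hqk : q + 1 ≤ k)
    (h₁ : ArcTri m p q T₁) (h₂ : ArcTri m (p + (q : ZMod m)) (k - q) T₂) :
    Apex m p k (glueSet m p k q T₁ T₂) q := by
  refine ⟨hq1, hqk, ?_, ?_⟩
  · rcases Nat.lt_or_ge q 2 with h | h
    · exact Or.inl (by omega)
    · right
      simp only [glueSet, Finset.mem_union, mem_apexSet]
      exact Or.inr (Or.inl ⟨h, trivial⟩)
  · rcases Nat.lt_or_ge k (q + 2) with h | h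
    · exact Or.inl (by omega)
    · right
      simp only [glueSet, Finset.mem_union, mem_apexSet]
      exact Or.inr (Or.inr ⟨h, trivial⟩)

lemma glue_filter₁ (hm : 0 < m) (hk : 2 * k ≤ m) (hq1 : 1 ≤ q) (hqk : q + 1 ≤ k)
    (h₁ : ArcTri m p q T₁) (h₂ : ArcTri m (p + (q : ZMod m)) (k - q) T₂) :
    (glueSet m p k q T₁ T₂).filter (IsArcChord m p q) = T₁ := by
  have hkm : k < m := by omega
  ext e
  simp only [Finset.mem_filter, glueSet, Finset.mem_union, mem_apexSet]
  constructor
  · rintro ⟨(h | h) | (⟨h2, rfl⟩ | ⟨h2, rfl⟩), hch⟩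
    · exact h
    · exfalso
      obtain ⟨i, j, hij2, hjq, hncl, he⟩ := h₂.1 e h
      obtain ⟨u, v, huv2, hvq, hnclu, he'⟩ := hch
      rw [he', och_shift] at he
      rw [och_eq_och_iff p (by omega) (by omega) (by omega) (by omega)] at he
      omega
    · exfalso
      obtain ⟨u, v, huv2, hvq, hnclu, he'⟩ := hch
      rw [och_eq_och_iff p (by omega) (by omega) (by omega) (by omega)] at he'
      omega
    · exfalso
      obtain ⟨u, v, huv2, hvq, hnclu, he'⟩ := hch
      rw [och_eq_och_iff p (by omega) (by omega) (by omega) (by omega)] at he'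
      omega
  · intro h
    exact ⟨Or.inl (Or.inl h), h₁.1 e h⟩

lemma glue_filter₂ (hm : 0 < m) (hk : 2 * k ≤ m) (hq1 : 1 ≤ q) (hqk : q + 1 ≤ k)
    (h₁ : ArcTri m p q T₁) (h₂ : ArcTri m (p + (q : ZMod m)) (k - q) T₂) :
    (glueSet m p k q T₁ T₂).filter (IsArcChord m (p + (q : ZMod m)) (k - q)) = T₂ := by
  have hkm : k < m := by omega
  ext e
  simp only [Finset.mem_filter, glueSet, Finset.mem_union, mem_apexSet]
  constructor
  · rintro ⟨(h | h) | (⟨h2, rfl⟩ | ⟨h2, rfl⟩), hch⟩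
    · exfalso
      obtain ⟨u, v, huv2, hvq, hnclu, he⟩ := h₁.1 e h
      obtain ⟨i, j, hij2, hjq, hncl, he'⟩ := hch
      rw [he, och_shift] at he'
      rw [och_eq_och_iff p (by omega) (by omega) (by omega) (by omega)] at he'
      omega
    · exact h
    · exfalso
      obtain ⟨i, j, hij2, hjq, hncl, he'⟩ := hch
      rw [och_shift] at he'
      rw [och_eq_och_iff p (by omega) (by omega) (by omega) (by omega)] at he'
      omega
    · exfalso
      obtain ⟨i, j, hij2, hjq, hncl, he'⟩ := hch
      rw [och_shift] at he'
      rw [och_eq_och_iff p (by omega) (by omega) (by omega) (by omega)] at he'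
      omega
  · intro h
    exact ⟨Or.inl (Or.inr h), h₂.1 e h⟩

end Core

end TypeB

namespace TypeB

variable {m : ℕ}

lemma arcTri_one_iff (p : ZMod m) {T : Finset (Sym2 (ZMod m))} :
    ArcTri m p 1 T ↔ T = ∅ := by
  constructor
  · intro hT
    rw [Finset.eq_empty_iff_forall_notMem]
    intro e he
    obtain ⟨i, j, h2, hj, _, _⟩ := hT.1 e he
    omega
  · rintro rfl
    refine ⟨fun e he => absurd he (Finset.notMem_empty _),
      fun e he => absurd he (Finset.notMem_empty _), fun e hch _ => ?_⟩
    obtain ⟨i, j, h2, hj, _, _⟩ := hch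
    omega

theorem card_arcTri (hm : 0 < m) :
    ∀ k, 1 ≤ k → 2 * k ≤ m → ∀ p : ZMod m,
      Nat.card {T : Finset (Sym2 (ZMod m)) // ArcTri m p k T} = catalan (k - 1) := by
  haveI : NeZero m := ⟨hm.ne'⟩
  intro k
  induction k using Nat.strong_induction_on with
  | _ k ih =>
  intro hk1 hk p
  rcases eq_or_lt_of_le hk1 with hk1' | hk2
  · -- k = 1
    subst hk1'
    haveI : Unique {T : Finset (Sym2 (ZMod m)) // ArcTri m p 1 T} :=
      { default := ⟨∅, (arcTri_one_iff p).mpr rfl⟩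
        uniq := fun x => Subtype.ext ((arcTri_one_iff p).mp x.2) }
    simp [Nat.card_unique]
  have hk2 : 2 ≤ k := hk2
  have hkm : k < m := by omega
  -- the decomposition bijection
  set F : ((r : Fin (k - 1)) × ({T₁ : Finset (Sym2 (ZMod m)) // ArcTri m p (r.1 + 1) T₁} ×
      {T₂ : Finset (Sym2 (ZMod m)) //
        ArcTri m (p + ((r.1 + 1 : ℕ) : ZMod m)) (k - (r.1 + 1)) T₂})) →
      {T : Finset (Sym2 (ZMod m)) // ArcTri m p k T} :=
    fun x => ⟨glueSet m p k (x.1.1 + 1) x.2.1.1 x.2.2.1,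
      glue_arcTri hm hk (by omega) (by have := x.1.isLt; omega) x.2.1.2 x.2.2.2⟩ with hF
  have hbij : Function.Bijective F := by
    constructor
    · rintro ⟨⟨r, hr⟩, ⟨⟨T₁, h₁⟩, ⟨T₂, h₂⟩⟩⟩ ⟨⟨r', hr'⟩, ⟨⟨T₁', h₁'⟩, ⟨T₂', h₂'⟩⟩⟩ h
      simp only [hF, Subtype.mk.injEq] at h
      have hgx := glue_arcTri hm hk (q := r + 1) (by omega) (by omega) h₁ h₂
      have hax := glue_apex hm hk (q := r + 1) (by omega) (by omega) h₁ h₂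
      have hay := glue_apex hm hk (q := r' + 1) (by omega) (by omega) h₁' h₂'
      rw [← h] at hay
      have hrr : r + 1 = r' + 1 := apex_unique hm hk hgx hax hay
      obtain rfl : r = r' := by omega
      have e₁ : T₁ = T₁' := by
        rw [← glue_filter₁ hm hk (q := r + 1) (by omega) (by omega) h₁ h₂, h,
          glue_filter₁ hm hk (by omega) (by omega) h₁' h₂']
      have e₂ : T₂ = T₂' := by
        rw [← glue_filter₂ hm hk (q := r + 1) (by omega) (by omega) h₁ h₂, h,
          glue_filter₂ hm hk (by omega) (by omega) h₁' h₂']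
      subst e₁
      subst e₂
      rfl
    · rintro ⟨T, hT⟩
      obtain ⟨q, hq⟩ := apex_exists hm hk hk2 hT
      obtain ⟨q', rfl⟩ : ∃ q', q = q' + 1 := ⟨q - 1, by have := hq.1; omega⟩
      have hlt : q' < k - 1 := by have := hq.2.1; omega
      refine ⟨⟨⟨q', hlt⟩, ⟨⟨T.filter (IsArcChord m p (q' + 1)), restrict₁ hm hk hT hq⟩,
        ⟨T.filter (IsArcChord m (p + ((q' + 1 : ℕ) : ZMod m)) (k - (q' + 1))),
          restrict₂ hm hk hT hq⟩⟩⟩, ?_⟩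
      exact Subtype.ext (decomp hm hk hT hq).symm
  have key : ∀ r : Fin (k - 1),
      Nat.card ({T₁ : Finset (Sym2 (ZMod m)) // ArcTri m p (r.1 + 1) T₁} ×
        {T₂ : Finset (Sym2 (ZMod m)) //
          ArcTri m (p + ((r.1 + 1 : ℕ) : ZMod m)) (k - (r.1 + 1)) T₂}) =
        catalan r.1 * catalan (k - 2 - r.1) := by
    intro r
    have hr := r.isLt
    rw [Nat.card_prod, ih (r.1 + 1) (by omega) (by omega) (by omega) p,
      ih (k - (r.1 + 1)) (by omega) (by omega) (by omega) _]
    congr 2 <;> omega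
  rw [← Nat.card_eq_of_bijective F hbij]
  haveI inst2 : ∀ r : Fin (k - 1), Fintype ({T₁ : Finset (Sym2 (ZMod m)) //
      ArcTri m p (r.1 + 1) T₁} × {T₂ : Finset (Sym2 (ZMod m)) //
        ArcTri m (p + ((r.1 + 1 : ℕ) : ZMod m)) (k - (r.1 + 1)) T₂}) :=
    fun r => Fintype.ofFinite _
  rw [Nat.card_eq_fintype_card, Fintype.card_sigma]
  have hterm : ∀ r : Fin (k - 1), Fintype.card ({T₁ : Finset (Sym2 (ZMod m)) //
      ArcTri m p (r.1 + 1) T₁} × {T₂ : Finset (Sym2 (ZMod m)) //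
        ArcTri m (p + ((r.1 + 1 : ℕ) : ZMod m)) (k - (r.1 + 1)) T₂}) =
      catalan r.1 * catalan (k - 2 - r.1) := by
    intro r
    rw [← Nat.card_eq_fintype_card, key r]
  rw [Finset.sum_congr rfl fun r _ => hterm r]
  have hk' : k - 1 = k - 2 + 1 := by omega
  rw [hk', catalan_succ]
end TypeB

namespace TypeB

variable {m : ℕ}

/-- crossing is invariant under rotation -/
lemma crosses_shift (c : ZMod m) {e f : Sym2 (ZMod m)} (h : Crosses m e f) :
    Crosses m (Sym2.map (· + c) e) (Sym2.map (· + c) f) := by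
  obtain ⟨x, y, z, w, he, hf, hcp⟩ := h
  refine ⟨x + c, y + c, z + c, w + c, by rw [he]; rfl, by rw [hf]; rfl, ?_⟩
  simpa [crossPairs, arcMem, add_sub_add_right_eq_sub] using hcp

lemma och_comm (p : ZMod m) (i j : ℕ) : och p i j = och p j i := by
  rw [och, och, Sym2.eq_swap]

lemma och_mod (p : ZMod m) (i j : ℕ) : och p (i % m) (j % m) = och p i j := by
  simp [och, ZMod.natCast_mod]

section CS

variable {n : ℕ} {a : ZMod (2 * n + 2)}

/-- the central symmetry map -/
lemma csmap_och (a : ZMod (2 * n + 2)) (i j : ℕ) :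
    Sym2.map (· + ((n : ZMod (2 * n + 2)) + 1)) (och a i j) = och a (i + (n + 1)) (j + (n + 1)) := by
  rw [och, och, Sym2.map_pair_eq]
  congr 1 <;> push_cast <;> ring

lemma centralDiag_eq_och (n : ℕ) (a : ZMod (2 * n + 2)) :
    centralDiag n a = och a 0 (n + 1) := by
  rw [centralDiag, och]
  congr 1 <;> push_cast <;> ring

lemma centralDiag_eq_och' (n : ℕ) (a : ZMod (2 * n + 2)) (t : ℕ) :
    centralDiag n (a + (t : ZMod (2 * n + 2))) = och a t (t + (n + 1)) := by
  rw [centralDiag, och]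
  congr 1 <;> push_cast <;> ring

lemma tri_mem_rep (hT : IsTriangulation (2 * n + 2) T) {e : Sym2 (ZMod (2 * n + 2))}
    (he : e ∈ T) :
    ∃ u v, u + 2 ≤ v ∧ v ≤ 2 * n + 1 ∧ v ≤ u + 2 * n ∧ e = och a u v := by
  obtain ⟨u, v, huv, hv, rfl⟩ := exists_och_repr (m := 2 * n + 2) (by omega) a e
  have hd := hT.1 _ he
  have hne : u ≠ v := by
    rintro rfl
    obtain ⟨x, y, hxy, hne, -, -⟩ := hd
    rw [och, Sym2.eq_iff] at hxy
    rcases hxy with ⟨h1, h2⟩ | ⟨h1, h2⟩ <;> exact hne (h1 ▸ h2 ▸ rfl)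
  have huv' : u < v := lt_of_le_of_ne huv hne
  rw [isDiagonal_och_iff a huv' (by omega)] at hd
  exact ⟨u, v, hd.1, by omega, by omega, rfl⟩

end CS

end TypeB

namespace TypeB

section CS

variable {n : ℕ} {a : ZMod (2 * n + 2)} {T T' : Finset (Sym2 (ZMod (2 * n + 2)))}

local notation "σ" => Sym2.map (· + ((n : ZMod (2 * n + 2)) + 1))
local notation "M" => 2 * n + 2

lemma csmap_invol (e : Sym2 (ZMod (2 * n + 2))) : σ (σ e) = e := by
  induction e using Sym2.inductionOn with
  | hf x y =>
    have hc : ((n : ZMod (2 * n + 2)) + 1) + ((n : ZMod (2 * n + 2)) + 1) = 0 := by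
      have h0 : ((2 * n + 2 : ℕ) : ZMod (2 * n + 2)) = 0 := ZMod.natCast_self _
      push_cast at h0
      linear_combination h0
    have hz : ∀ z : ZMod (2 * n + 2),
        z + ((n : ZMod (2 * n + 2)) + 1) + ((n : ZMod (2 * n + 2)) + 1) = z := by
      intro z; rw [add_assoc, hc, add_zero]
    simp only [Sym2.map_pair_eq]
    rw [hz, hz]

/-- rotation of a chord of the first half-arc -/
lemma csmap_halfchord {i j : ℕ} (h2 : i + 2 ≤ j) (hj : j ≤ n + 1)
    (hncl : ¬(i = 0 ∧ j = n + 1)) :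
    σ (och a i j) = (if j ≤ n then och a (i + (n + 1)) (j + (n + 1))
      else och a 0 (i + (n + 1))) := by
  rw [csmap_och]
  split_ifs with hjn
  · rfl
  · have hj1 : j = n + 1 := by omega
    subst hj1
    have h1 : och a (i + (n + 1)) ((n + 1) + (n + 1)) =
        och a ((i + (n + 1)) % M) (((n + 1) + (n + 1)) % M) := (och_mod _ _ _).symm
    rw [h1, Nat.mod_eq_of_lt (show i + (n + 1) < M by omega),
      show ((n + 1) + (n + 1)) % M = 0 by
        rw [show (n + 1) + (n + 1) = 2 * n + 2 by ring]; exact Nat.mod_self _]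
    exact och_comm a _ _

/-- trichotomy for chords not crossing the central diagonal -/
lemma noncross_central {u v : ℕ} (hn : 1 ≤ n) (h2 : u + 2 ≤ v) (hv : v ≤ 2 * n + 1)
    (hnc : ¬ Crosses M (och a 0 (n + 1)) (och a u v)) :
    u = 0 ∨ v ≤ n + 1 ∨ n + 1 ≤ u := by
  rw [crosses_och_iff a (show 0 < n + 1 by omega) (by omega) (by omega) (by omega)] at hnc
  omega

/-- the restriction of a centrally symmetric triangulation containing the central diagonal
to the first half-arc is an arc triangulation -/
lemma psi_restrict (hn : 1 ≤ n) (hT : CSTriangulation n T) (hD : centralDiag n a ∈ T) :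
    ArcTri M a (n + 1) (T.filter (IsArcChord M a (n + 1))) := by
  rw [centralDiag_eq_och] at hD
  refine ⟨fun e he => (Finset.mem_filter.mp he).2,
    fun e he f hf => hT.1.2.1 e (Finset.mem_filter.mp he).1 f (Finset.mem_filter.mp hf).1,
    fun e hch hnot => ?_⟩
  obtain ⟨i, j, hij2, hjq, hncl, rfl⟩ := hch
  have hnotT : och a i j ∉ T := fun h =>
    hnot (Finset.mem_filter.mpr ⟨h, ⟨i, j, hij2, hjq, hncl, rfl⟩⟩)
  have hdiag : IsDiagonal M (och a i j) := by
    rw [isDiagonal_och_iff a (by omega) (by omega)]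
    omega
  obtain ⟨f, hfT, hcross⟩ := hT.1.2.2 _ hdiag hnotT
  obtain ⟨u, v, huv2, hvM, hgap, rfl⟩ := tri_mem_rep (a := a) hT.1 hfT
  have htri : u = 0 ∨ v ≤ n + 1 ∨ n + 1 ≤ u :=
    noncross_central hn huv2 hvM (hT.1.2.1 _ hD _ hfT)
  rw [crosses_och_iff a (by omega) (by omega) (by omega) (by omega)] at hcross
  refine ⟨och a u v, Finset.mem_filter.mpr ⟨hfT, ⟨u, v, huv2, by omega, by omega, rfl⟩⟩, ?_⟩
  rw [crosses_och_iff a (by omega) (by omega) (by omega) (by omega)]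
  omega

/-- decomposition of a centrally symmetric triangulation containing the central diagonal -/
lemma psi_decomp (hn : 1 ≤ n) (hT : CSTriangulation n T) (hD : centralDiag n a ∈ T) :
    T = insert (och a 0 (n + 1))
      ((T.filter (IsArcChord M a (n + 1))) ∪ (T.filter (IsArcChord M a (n + 1))).image σ) := by
  rw [centralDiag_eq_och] at hD
  ext e
  simp only [Finset.mem_insert, Finset.mem_union, Finset.mem_image, Finset.mem_filter]
  constructor
  · intro he
    obtain ⟨u, v, huv2, hvM, hgap, rfl⟩ := tri_mem_rep (a := a) hT.1 he
    have htri : u = 0 ∨ v ≤ n + 1 ∨ n + 1 ≤ u :=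
      noncross_central hn huv2 hvM (hT.1.2.1 _ hD _ he)
    by_cases hv : v ≤ n + 1
    · by_cases hcl : u = 0 ∧ v = n + 1
      · left
        rw [och_eq_och_iff a (by omega) (by omega) (by omega) (by omega)]
        omega
      · exact Or.inr (Or.inl ⟨he, ⟨u, v, huv2, hv, hcl, rfl⟩⟩)
    by_cases hu : n + 1 ≤ u
    · -- e = σ (och a (u-n-1) (v-n-1))
      right; right
      refine ⟨och a (u - (n + 1)) (v - (n + 1)), ⟨?_, ?_⟩, ?_⟩
      · -- membership in T via symmetry
        have h1 := hT.2 _ he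
        have h2 : σ (och a u v) = och a (u - (n + 1)) (v - (n + 1)) := by
          rw [csmap_och, ← och_mod a (u + (n + 1)) (v + (n + 1))]
          rw [mod_eq_sub_of_lt (by omega) (by omega), mod_eq_sub_of_lt (by omega) (by omega)]
          congr 1 <;> omega
        rwa [h2] at h1
      · exact ⟨u - (n + 1), v - (n + 1), by omega, by omega, by omega, rfl⟩
      · rw [csmap_halfchord (by omega) (by omega) (by omega), if_pos (by omega),
          show u - (n + 1) + (n + 1) = u by omega, show v - (n + 1) + (n + 1) = v by omega]
    · -- u = 0, v ≥ n+2 : e = σ (och a (v-n-1) (n+1))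
      have hu0 : u = 0 := by omega
      subst hu0
      right; right
      refine ⟨och a (v - (n + 1)) (n + 1), ⟨?_, ?_⟩, ?_⟩
      · have h1 := hT.2 _ he
        have h2 : σ (och a 0 v) = och a (v - (n + 1)) (n + 1) := by
          rw [csmap_och, ← och_mod a (0 + (n + 1)) (v + (n + 1))]
          rw [Nat.mod_eq_of_lt (by omega), mod_eq_sub_of_lt (by omega) (by omega)]
          rw [och_comm]
          congr 1 <;> omega
        rwa [h2] at h1
      · exact ⟨v - (n + 1), n + 1, by omega, by omega, by omega, rfl⟩
      · rw [csmap_halfchord (by omega) (by omega) (by omega), if_neg (by omega),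
          show v - (n + 1) + (n + 1) = v by omega]
  · rintro (he | ⟨he, -⟩ | ⟨f, ⟨hf, -⟩, rfl⟩)
    · rwa [he]
    · exact he
    · exact hT.2 _ hf

end CS

end TypeB

namespace TypeB

section CS

variable {n : ℕ} {a : ZMod (2 * n + 2)} {T T' : Finset (Sym2 (ZMod (2 * n + 2)))}

local notation "σ" => Sym2.map (· + ((n : ZMod (2 * n + 2)) + 1))
local notation "M" => 2 * n + 2

lemma diag_rep (hn : 1 ≤ n) (a : ZMod (2 * n + 2)) {e : Sym2 (ZMod (2 * n + 2))}
    (hd : IsDiagonal M e) :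
    ∃ u v, u + 2 ≤ v ∧ v ≤ 2 * n + 1 ∧ v ≤ u + 2 * n ∧ e = och a u v := by
  obtain ⟨u, v, huv, hv, rfl⟩ := exists_och_repr (m := 2 * n + 2) (by omega) a e
  have hne : u ≠ v := by
    rintro rfl
    obtain ⟨x, y, hxy, hne, -, -⟩ := hd
    rw [och, Sym2.eq_iff] at hxy
    rcases hxy with ⟨h1, h2⟩ | ⟨h1, h2⟩ <;> exact hne (h1 ▸ h2 ▸ rfl)
  have huv' : u < v := lt_of_le_of_ne huv hne
  rw [isDiagonal_och_iff a huv' (by omega)] at hd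
  exact ⟨u, v, hd.1, by omega, by omega, rfl⟩

lemma sigma_centralDiag : σ (och a 0 (n + 1)) = och a 0 (n + 1) := by
  rw [csmap_och, ← och_mod a (0 + (n + 1)) ((n + 1) + (n + 1)),
    Nat.mod_eq_of_lt (by omega),
    show ((n + 1) + (n + 1)) % M = 0 by
      rw [show (n + 1) + (n + 1) = 2 * n + 2 by ring]; exact Nat.mod_self _,
    show 0 + (n + 1) = n + 1 by omega]
  exact och_comm a _ _

/-- normalized description of members of the glued symmetric set -/
lemma build_rep (hT' : ArcTri M a (n + 1) T') {e : Sym2 (ZMod M)}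
    (he : e ∈ insert (och a 0 (n + 1)) (T' ∪ T'.image σ)) :
    e = och a 0 (n + 1) ∨
    (∃ i j, i + 2 ≤ j ∧ j ≤ n + 1 ∧ ¬(i = 0 ∧ j = n + 1) ∧ och a i j ∈ T' ∧ e = och a i j) ∨
    (∃ i j, i + 2 ≤ j ∧ j ≤ n ∧ och a i j ∈ T' ∧ e = och a (i + (n + 1)) (j + (n + 1))) ∨
    (∃ i, 1 ≤ i ∧ i + 2 ≤ n + 1 ∧ och a i (n + 1) ∈ T' ∧ e = och a 0 (i + (n + 1))) := by
  rw [Finset.mem_insert, Finset.mem_union, Finset.mem_image] at he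
  rcases he with he | he | ⟨f, hf, rfl⟩
  · exact Or.inl he
  · obtain ⟨i, j, h2, hj, hncl, rfl⟩ := hT'.1 e he
    exact Or.inr (Or.inl ⟨i, j, h2, hj, hncl, he, rfl⟩)
  · obtain ⟨i, j, h2, hj, hncl, rfl⟩ := hT'.1 f hf
    rw [csmap_halfchord h2 hj hncl]
    split_ifs with hjn
    · exact Or.inr (Or.inr (Or.inl ⟨i, j, h2, hjn, hf, rfl⟩))
    · have hj1 : j = n + 1 := by omega
      subst hj1
      exact Or.inr (Or.inr (Or.inr ⟨i, by omega, by omega, hf, rfl⟩))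

lemma build_noncross (hn : 1 ≤ n) (hT' : ArcTri M a (n + 1) T')
    {e f : Sym2 (ZMod M)} (he : e ∈ insert (och a 0 (n + 1)) (T' ∪ T'.image σ))
    (hf : f ∈ insert (och a 0 (n + 1)) (T' ∪ T'.image σ)) : ¬ Crosses M e f := by
  have hne : ∀ i j u v : ℕ, i < j → j < M → u < v → v < M →
      ¬((i < u ∧ u < j ∧ j < v) ∨ (u < i ∧ i < v ∧ v < j)) →
      ¬ Crosses M (och a i j) (och a u v) := by
    intro i j u v h1 h2 h3 h4 h5
    rw [crosses_och_iff a h1 h2 h3 h4]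
    exact h5
  -- reduce crossings of rotated chords to crossings of the originals
  rcases build_rep hT' he with rfl | ⟨i, j, h2, hj, hncl, heT, rfl⟩ |
      ⟨i, j, h2, hj, heT, rfl⟩ | ⟨i, h1, h2, heT, rfl⟩ <;>
    rcases build_rep hT' hf with rfl | ⟨u, v, g2, gv, gncl, hfT, rfl⟩ |
      ⟨u, v, g2, gv, hfT, rfl⟩ | ⟨u, g1, g2, hfT, rfl⟩
  -- D vs D
  · exact hne _ _ _ _ (by omega) (by omega) (by omega) (by omega) (by omega)
  -- D vs T'
  · exact hne _ _ _ _ (by omega) (by omega) (by omega) (by omega) (by omega)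
  -- D vs imA
  · exact hne _ _ _ _ (by omega) (by omega) (by omega) (by omega) (by omega)
  -- D vs imB
  · exact hne _ _ _ _ (by omega) (by omega) (by omega) (by omega) (by omega)
  -- T' vs D
  · exact hne _ _ _ _ (by omega) (by omega) (by omega) (by omega) (by omega)
  -- T' vs T'
  · exact hT'.2.1 _ heT _ hfT
  -- T' vs imA
  · exact hne _ _ _ _ (by omega) (by omega) (by omega) (by omega) (by omega)
  -- T' vs imB
  · exact hne _ _ _ _ (by omega) (by omega) (by omega) (by omega) (by omega)
  -- imA vs D
  · exact hne _ _ _ _ (by omega) (by omega) (by omega) (by omega) (by omega)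
  -- imA vs T'
  · exact hne _ _ _ _ (by omega) (by omega) (by omega) (by omega) (by omega)
  -- imA vs imA : reduces to originals
  · rw [crosses_och_iff a (by omega) (by omega) (by omega) (by omega)]
    intro hpat
    refine hT'.2.1 _ heT _ hfT ?_
    rw [crosses_och_iff a (by omega) (by omega) (by omega) (by omega)]
    omega
  -- imA vs imB
  · rw [crosses_och_iff a (by omega) (by omega) (by omega) (by omega)]
    intro hpat
    refine hT'.2.1 _ heT _ hfT ?_
    rw [crosses_och_iff a (by omega) (by omega) (by omega) (by omega)]
    omega
  -- imB vs D
  · exact hne _ _ _ _ (by omega) (by omega) (by omega) (by omega) (by omega)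
  -- imB vs T'
  · exact hne _ _ _ _ (by omega) (by omega) (by omega) (by omega) (by omega)
  -- imB vs imA
  · rw [crosses_och_iff a (by omega) (by omega) (by omega) (by omega)]
    intro hpat
    refine hT'.2.1 _ heT _ hfT ?_
    rw [crosses_och_iff a (by omega) (by omega) (by omega) (by omega)]
    omega
  -- imB vs imB
  · exact hne _ _ _ _ (by omega) (by omega) (by omega) (by omega) (by omega)

lemma build_cst (hn : 1 ≤ n) (hT' : ArcTri M a (n + 1) T') :
    CSTriangulation n (insert (och a 0 (n + 1)) (T' ∪ T'.image σ)) ∧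
      centralDiag n a ∈ insert (och a 0 (n + 1)) (T' ∪ T'.image σ) := by
  constructor
  · refine ⟨⟨?_, fun e he f hf => build_noncross hn hT' he hf, ?_⟩, ?_⟩
    · -- all members are diagonals
      intro e he
      rcases build_rep hT' he with rfl | ⟨i, j, h2, hj, hncl, heT, rfl⟩ |
          ⟨i, j, h2, hj, heT, rfl⟩ | ⟨i, h1, h2, heT, rfl⟩ <;>
        rw [isDiagonal_och_iff a (by omega) (by omega)] <;> omega
    · -- maximality
      intro e hd hnot
      obtain ⟨u, v, huv2, hvM, hgap, rfl⟩ := diag_rep hn a hd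
      by_cases hv : v ≤ n + 1
      · by_cases hcl : u = 0 ∧ v = n + 1
        · exact absurd (Finset.mem_insert.mpr (Or.inl (by
            rw [och_eq_och_iff a (by omega) (by omega) (by omega) (by omega)]; omega))) hnot
        · have hnotT' : och a u v ∉ T' := fun h =>
            hnot (Finset.mem_insert.mpr (Or.inr (Finset.mem_union.mpr (Or.inl h))))
          obtain ⟨f, hfT, hcr⟩ := hT'.2.2 _ ⟨u, v, huv2, hv, hcl, rfl⟩ hnotT'
          exact ⟨f, Finset.mem_insert.mpr (Or.inr (Finset.mem_union.mpr (Or.inl hfT))), hcr⟩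
      by_cases hu : n + 1 ≤ u
      · -- e is the rotation of a chord of the half-arc
        have hch : IsArcChord M a (n + 1) (och a (u - (n + 1)) (v - (n + 1))) :=
          ⟨u - (n + 1), v - (n + 1), by omega, by omega, by omega, rfl⟩
        have hsig : σ (och a (u - (n + 1)) (v - (n + 1))) = och a u v := by
          rw [csmap_halfchord (by omega) (by omega) (by omega), if_pos (by omega),
            show u - (n + 1) + (n + 1) = u by omega, show v - (n + 1) + (n + 1) = v by omega]
        have hnotT' : och a (u - (n + 1)) (v - (n + 1)) ∉ T' := fun h =>
          hnot (Finset.mem_insert.mpr (Or.inr (Finset.mem_union.mpr (Or.inr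
            (Finset.mem_image.mpr ⟨_, h, hsig⟩)))))
        obtain ⟨f, hfT, hcr⟩ := hT'.2.2 _ hch hnotT'
        refine ⟨σ f, Finset.mem_insert.mpr (Or.inr (Finset.mem_union.mpr (Or.inr
          (Finset.mem_image.mpr ⟨f, hfT, rfl⟩)))), ?_⟩
        have := crosses_shift ((n : ZMod (2 * n + 2)) + 1) hcr
        rwa [hsig] at this
      by_cases hu0 : u = 0
      · subst hu0
        have hch : IsArcChord M a (n + 1) (och a (v - (n + 1)) (n + 1)) :=
          ⟨v - (n + 1), n + 1, by omega, by omega, by omega, rfl⟩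
        have hsig : σ (och a (v - (n + 1)) (n + 1)) = och a 0 v := by
          rw [csmap_halfchord (by omega) (by omega) (by omega), if_neg (by omega),
            show v - (n + 1) + (n + 1) = v by omega]
        have hnotT' : och a (v - (n + 1)) (n + 1) ∉ T' := fun h =>
          hnot (Finset.mem_insert.mpr (Or.inr (Finset.mem_union.mpr (Or.inr
            (Finset.mem_image.mpr ⟨_, h, hsig⟩)))))
        obtain ⟨f, hfT, hcr⟩ := hT'.2.2 _ hch hnotT'
        refine ⟨σ f, Finset.mem_insert.mpr (Or.inr (Finset.mem_union.mpr (Or.inr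
          (Finset.mem_image.mpr ⟨f, hfT, rfl⟩)))), ?_⟩
        have := crosses_shift ((n : ZMod (2 * n + 2)) + 1) hcr
        rwa [hsig] at this
      · -- e crosses the central diagonal itself
        refine ⟨och a 0 (n + 1), Finset.mem_insert_self _ _, ?_⟩
        rw [crosses_och_iff a (by omega) (by omega) (by omega) (by omega)]
        omega
    · -- symmetry
      intro e he
      rw [Finset.mem_insert, Finset.mem_union, Finset.mem_image] at he
      rcases he with rfl | he | ⟨f, hf, rfl⟩
      · rw [sigma_centralDiag]
        exact Finset.mem_insert_self _ _
      · exact Finset.mem_insert.mpr (Or.inr (Finset.mem_union.mpr (Or.inr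
          (Finset.mem_image.mpr ⟨e, he, rfl⟩))))
      · rw [csmap_invol]
        exact Finset.mem_insert.mpr (Or.inr (Finset.mem_union.mpr (Or.inl hf)))
  · rw [centralDiag_eq_och]
    exact Finset.mem_insert_self _ _

lemma build_filter (hn : 1 ≤ n) (hT' : ArcTri M a (n + 1) T') :
    (insert (och a 0 (n + 1)) (T' ∪ T'.image σ)).filter (IsArcChord M a (n + 1)) = T' := by
  ext e
  rw [Finset.mem_filter]
  constructor
  · rintro ⟨he, u, v, g2, gv, gncl, rfl⟩
    rcases build_rep hT' he with heq | ⟨i, j, h2, hj, hncl, heT, heq⟩ |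
        ⟨i, j, h2, hj, heT, heq⟩ | ⟨i, h1, h2, heT, heq⟩
    · rw [och_eq_och_iff a (by omega) (by omega) (by omega) (by omega)] at heq
      omega
    · rw [och_eq_och_iff a (by omega) (by omega) (by omega) (by omega)] at heq
      obtain ⟨rfl, rfl⟩ : u = i ∧ v = j := by omega
      exact heT
    · rw [och_eq_och_iff a (by omega) (by omega) (by omega) (by omega)] at heq
      omega
    · rw [och_eq_och_iff a (by omega) (by omega) (by omega) (by omega)] at heq
      omega
  · intro he
    exact ⟨Finset.mem_insert.mpr (Or.inr (Finset.mem_union.mpr (Or.inl he))), hT'.1 e he⟩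

theorem card_psi (hn : 1 ≤ n) (a : ZMod (2 * n + 2)) :
    Nat.card {T : Finset (Sym2 (ZMod (2 * n + 2))) //
      CSTriangulation n T ∧ centralDiag n a ∈ T} = catalan n := by
  set F : {T : Finset (Sym2 (ZMod (2 * n + 2))) // CSTriangulation n T ∧ centralDiag n a ∈ T} →
      {T' : Finset (Sym2 (ZMod (2 * n + 2))) // ArcTri M a (n + 1) T'} :=
    fun x => ⟨x.1.filter (IsArcChord M a (n + 1)), psi_restrict hn x.2.1 x.2.2⟩ with hF
  have hbij : Function.Bijective F := by
    constructor
    · rintro ⟨T₁, h₁⟩ ⟨T₂, h₂⟩ h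
      simp only [hF, Subtype.mk.injEq] at h
      refine Subtype.ext ?_
      show T₁ = T₂
      rw [psi_decomp hn h₁.1 h₁.2, psi_decomp hn h₂.1 h₂.2, h]
    · rintro ⟨T', hT'⟩
      refine ⟨⟨insert (och a 0 (n + 1)) (T' ∪ T'.image σ), build_cst hn hT'⟩, ?_⟩
      exact Subtype.ext (build_filter hn hT')
  rw [Nat.card_eq_of_bijective F hbij,
    card_arcTri (m := M) (by omega) (n + 1) (by omega) (by omega) a]
  simp

end CS

end TypeB

namespace TypeB

section Num

variable {n : ℕ} {a : ZMod (2 * n + 2)} {t : ℕ} {T T₁ T₂ : Finset (Sym2 (ZMod (2 * n + 2)))}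

local notation "σ" => Sym2.map (· + ((n : ZMod (2 * n + 2)) + 1))
local notation "M" => 2 * n + 2

/-- a `σ`-fixed member of a triangulation containing a central diagonal equals that diagonal -/
lemma central_unique (hn : 1 ≤ n) (hT : IsTriangulation M T) {s : ℕ} (hs : s ≤ n)
    (hDs : och a s (s + (n + 1)) ∈ T) {e : Sym2 (ZMod M)} (he : e ∈ T) (hσ : σ e = e) :
    e = och a s (s + (n + 1)) := by
  obtain ⟨u, v, huv2, hvM, hgap, rfl⟩ := tri_mem_rep (a := a) hT he
  -- compute σ e in normalized offsets
  by_cases hu : u + (n + 1) < M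
  · by_cases hv : v + (n + 1) < M
    · -- no wrap : impossible since then {u+n+1, v+n+1} = {u,v} with all distinct
      exfalso
      rw [csmap_och] at hσ
      rw [och_eq_och_iff a (by omega) (by omega) (by omega) (by omega)] at hσ
      omega
    · -- v wraps : σ e = och a (u + n + 1) (v - n - 1) ; equality forces v = u + n + 1
      have hseq : σ (och a u v) = och a (u + (n + 1)) (v - (n + 1)) := by
        rw [csmap_och, ← och_mod a (u + (n + 1)) (v + (n + 1)), Nat.mod_eq_of_lt hu,
          mod_eq_sub_of_lt (by omega) (by omega)]
        congr 1
        omega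
      rw [hseq, och_eq_och_iff a (by omega) (by omega) (by omega) (by omega)] at hσ
      have hvu : v = u + (n + 1) := by omega
      -- e is the central diagonal at u ; it does not cross the one at s only if u = s
      have hu_n : u ≤ n := by omega
      have hnc := hT.2.1 _ hDs _ he
      rw [crosses_och_iff a (by omega) (by omega) (by omega) (by omega)] at hnc
      have hus : u = s := by omega
      subst hus
      rw [hvu]
  · -- u wraps (hence v wraps) : σ e = och a (u - n - 1) (v - n - 1) ; equality impossible
    exfalso
    have hseq : σ (och a u v) = och a (u - (n + 1)) (v - (n + 1)) := by
      rw [csmap_och, ← och_mod a (u + (n + 1)) (v + (n + 1)),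
        mod_eq_sub_of_lt (by omega) (by omega), mod_eq_sub_of_lt (by omega) (by omega)]
      congr 1 <;> omega
    rw [hseq, och_eq_och_iff a (by omega) (by omega) (by omega) (by omega)] at hσ
    omega

lemma sigma_centralDiag' (hs : s ≤ n) : σ (och a s (s + (n + 1))) = och a s (s + (n + 1)) := by
  rw [csmap_och, ← och_mod a (s + (n + 1)) (s + (n + 1) + (n + 1)), Nat.mod_eq_of_lt (by omega),
    mod_eq_sub_of_lt (by omega) (by omega), show s + (n + 1) + (n + 1) - (2 * n + 2) = s by omega]
  exact och_comm a _ _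

lemma flip_struct (hn : 1 ≤ n) (ht1 : 1 ≤ t) (htn : t ≤ n)
    (h₁ : CSTriangulation n T₁) (h₂ : CSTriangulation n T₂)
    (hD : och a 0 (n + 1) ∈ T₁) (hD' : och a t (t + (n + 1)) ∈ T₂)
    (hc₁ : (T₁ \ T₂).card ≤ 2) (hc₂ : (T₂ \ T₁).card ≤ 2) :
    T₁ \ T₂ = {och a 0 (n + 1)} ∧ T₂ \ T₁ = {och a t (t + (n + 1))} := by
  have hDD' : Crosses M (och a 0 (n + 1)) (och a t (t + (n + 1))) := by
    rw [crosses_och_iff a (by omega) (by omega) (by omega) (by omega)]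
    omega
  have hD'D : Crosses M (och a t (t + (n + 1))) (och a 0 (n + 1)) := by
    rw [crosses_och_iff a (by omega) (by omega) (by omega) (by omega)]
    omega
  have hDn2 : och a 0 (n + 1) ∉ T₂ := fun h => h₂.1.2.1 _ h _ hD' hDD'
  have hD'n1 : och a t (t + (n + 1)) ∉ T₁ := fun h => h₁.1.2.1 _ h _ hD hD'D
  have key : ∀ (S S' : Finset (Sym2 (ZMod M))), CSTriangulation n S → CSTriangulation n S' →
      ∀ s : ℕ, s ≤ n → och a s (s + (n + 1)) ∈ S → och a s (s + (n + 1)) ∉ S' →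
      (S \ S').card ≤ 2 → S \ S' = {och a s (s + (n + 1))} := by
    intro S S' hS hS' s hs hsS hsS' hcard
    have hDmem : och a s (s + (n + 1)) ∈ S \ S' := Finset.mem_sdiff.mpr ⟨hsS, hsS'⟩
    rw [Finset.eq_singleton_iff_unique_mem]
    refine ⟨hDmem, fun e he => ?_⟩
    by_contra hne
    rw [Finset.mem_sdiff] at he
    have hσe : σ e ∈ S \ S' := by
      rw [Finset.mem_sdiff]
      refine ⟨hS.2 _ he.1, fun h => he.2 ?_⟩
      have := hS'.2 _ h
      rwa [csmap_invol] at this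
    have hσne : σ e ≠ e := by
      intro h
      exact hne (central_unique hn hS.1 hs hsS he.1 h)
    have hσnD : σ e ≠ och a s (s + (n + 1)) := by
      intro h
      apply hne
      have := congrArg (Sym2.map (· + ((n : ZMod (2 * n + 2)) + 1))) h
      rwa [csmap_invol, sigma_centralDiag' hs] at this
    have hsub : insert (och a s (s + (n + 1))) (insert e ({σ e} : Finset (Sym2 (ZMod M)))) ⊆
        S \ S' := by
      intro x hx
      simp only [Finset.mem_insert, Finset.mem_singleton] at hx
      rcases hx with rfl | rfl | rfl
      · exact hDmem
      · exact Finset.mem_sdiff.mpr he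
      · exact hσe
    have hcard3 : (insert (och a s (s + (n + 1)))
        (insert e ({σ e} : Finset (Sym2 (ZMod M))))).card = 3 := by
      rw [Finset.card_insert_of_notMem, Finset.card_insert_of_notMem, Finset.card_singleton]
      · simp only [Finset.mem_singleton]
        exact fun h => hσne h.symm
      · simp only [Finset.mem_insert, Finset.mem_singleton]
        push_neg
        exact ⟨fun h => hne h.symm, fun h => hσnD h.symm⟩
    have := Finset.card_le_card hsub
    omega
  constructor
  · simpa using key T₁ T₂ h₁ h₂ 0 (by omega) (by simpa using hD) (by simpa using hDn2) hc₁
  · exact key T₂ T₁ h₂ h₁ t htn hD' hD'n1 hc₂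

lemma flip_T₂ (hn : 1 ≤ n) (ht1 : 1 ≤ t) (htn : t ≤ n)
    (h₁ : CSTriangulation n T₁) (h₂ : CSTriangulation n T₂)
    (hD : och a 0 (n + 1) ∈ T₁) (hD' : och a t (t + (n + 1)) ∈ T₂)
    (hc₁ : (T₁ \ T₂).card ≤ 2) (hc₂ : (T₂ \ T₁).card ≤ 2) :
    T₂ = insert (och a t (t + (n + 1))) (T₁.erase (och a 0 (n + 1))) := by
  obtain ⟨hs₁, hs₂⟩ := flip_struct hn ht1 htn h₁ h₂ hD hD' hc₁ hc₂
  ext e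
  simp only [Finset.mem_insert, Finset.mem_erase]
  constructor
  · intro he
    by_cases h : e ∈ T₁
    · right
      refine ⟨?_, h⟩
      rintro rfl
      have : och a 0 (n + 1) ∈ T₁ \ T₂ := hs₁ ▸ Finset.mem_singleton_self _
      exact (Finset.mem_sdiff.mp this).2 he
    · have : e ∈ T₂ \ T₁ := Finset.mem_sdiff.mpr ⟨he, h⟩
      rw [hs₂, Finset.mem_singleton] at this
      exact Or.inl this
  · rintro (rfl | ⟨hne, h⟩)
    · exact hD'
    · by_contra h2
      have : e ∈ T₁ \ T₂ := Finset.mem_sdiff.mpr ⟨h, h2⟩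
      rw [hs₁, Finset.mem_singleton] at this
      exact hne this

end Num

end TypeB

namespace TypeB

section Num

variable {n : ℕ} {a : ZMod (2 * n + 2)} {t : ℕ} {T T₁ T₂ : Finset (Sym2 (ZMod (2 * n + 2)))}

local notation "σ" => Sym2.map (· + ((n : ZMod (2 * n + 2)) + 1))
local notation "M" => 2 * n + 2

lemma rect_mem₁ (hn : 1 ≤ n) (ht1 : 2 ≤ t) (htn : t ≤ n)
    (h₁ : CSTriangulation n T₁) (h₂ : CSTriangulation n T₂)
    (hD : och a 0 (n + 1) ∈ T₁) (hD' : och a t (t + (n + 1)) ∈ T₂)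
    (hc₁ : (T₁ \ T₂).card ≤ 2) (hc₂ : (T₂ \ T₁).card ≤ 2) :
    och a 0 t ∈ T₁ := by
  obtain ⟨hs₁, hs₂⟩ := flip_struct hn (by omega) htn h₁ h₂ hD hD' hc₁ hc₂
  have hT2 := flip_T₂ hn (by omega) htn h₁ h₂ hD hD' hc₁ hc₂
  have hE₁T₂ : och a 0 t ∈ T₂ := by
    by_contra hnot
    have hdiag : IsDiagonal M (och a 0 t) := by
      rw [isDiagonal_och_iff a (by omega) (by omega)]
      omega
    obtain ⟨f, hfT, hcross⟩ := h₂.1.2.2 _ hdiag hnot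
    obtain ⟨u, v, huv2, hvM, hgap, rfl⟩ := tri_mem_rep (a := a) h₂.1 hfT
    rw [crosses_och_iff a (by omega) (by omega) (by omega) (by omega)] at hcross
    -- crossing forces 0 < u < t < v
    have hncD' := h₂.1.2.1 _ hD' _ hfT
    rw [crosses_och_iff a (by omega) (by omega) (by omega) (by omega)] at hncD'
    -- so v ≥ t + n + 1
    have hfT₁ : och a u v ∈ T₁ := by
      rw [hT2] at hfT
      rcases Finset.mem_insert.mp hfT with h | h
      · exfalso
        rw [och_eq_och_iff a (by omega) (by omega) (by omega) (by omega)] at h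
        omega
      · exact (Finset.mem_erase.mp h).2
    have hncD := h₁.1.2.1 _ hD _ hfT₁
    rw [crosses_och_iff a (by omega) (by omega) (by omega) (by omega)] at hncD
    omega
  rw [hT2] at hE₁T₂
  rcases Finset.mem_insert.mp hE₁T₂ with h | h
  · exfalso
    rw [och_eq_och_iff a (by omega) (by omega) (by omega) (by omega)] at h
    omega
  · exact (Finset.mem_erase.mp h).2

lemma rect_mem₂ (hn : 1 ≤ n) (ht1 : 1 ≤ t) (htn : t + 1 ≤ n)
    (h₁ : CSTriangulation n T₁) (h₂ : CSTriangulation n T₂)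
    (hD : och a 0 (n + 1) ∈ T₁) (hD' : och a t (t + (n + 1)) ∈ T₂)
    (hc₁ : (T₁ \ T₂).card ≤ 2) (hc₂ : (T₂ \ T₁).card ≤ 2) :
    och a t (n + 1) ∈ T₁ := by
  obtain ⟨hs₁, hs₂⟩ := flip_struct hn ht1 (by omega) h₁ h₂ hD hD' hc₁ hc₂
  by_contra hnot
  have hdiag : IsDiagonal M (och a t (n + 1)) := by
    rw [isDiagonal_och_iff a (by omega) (by omega)]
    omega
  obtain ⟨f, hfT, hcross⟩ := h₁.1.2.2 _ hdiag hnot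
  obtain ⟨u, v, huv2, hvM, hgap, rfl⟩ := tri_mem_rep (a := a) h₁.1 hfT
  rw [crosses_och_iff a (by omega) (by omega) (by omega) (by omega)] at hcross
  -- f ≠ D
  have hfD : ¬(u = 0 ∧ v = n + 1) := by omega
  have hfT₂ : och a u v ∈ T₂ := by
    by_contra h2
    have : och a u v ∈ T₁ \ T₂ := Finset.mem_sdiff.mpr ⟨hfT, h2⟩
    rw [hs₁, Finset.mem_singleton,
      och_eq_och_iff a (by omega) (by omega) (by omega) (by omega)] at this
    omega
  have hncD := h₁.1.2.1 _ hD _ hfT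
  rw [crosses_och_iff a (by omega) (by omega) (by omega) (by omega)] at hncD
  have hncD' := h₂.1.2.1 _ hD' _ hfT₂
  rw [crosses_och_iff a (by omega) (by omega) (by omega) (by omega)] at hncD'
  omega

lemma filter_chord_trans₁ (htn : t ≤ n) :
    (T₁.filter (IsArcChord M a (n + 1))).filter (IsArcChord M a t) =
      T₁.filter (IsArcChord M a t) := by
  ext e
  simp only [Finset.mem_filter, and_assoc]
  constructor
  · rintro ⟨h1, -, h3⟩
    exact ⟨h1, h3⟩
  · rintro ⟨h1, h2⟩
    obtain ⟨i, j, hij2, hj, hncl, rfl⟩ := h2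
    exact ⟨h1, ⟨i, j, hij2, by omega, by omega, rfl⟩, ⟨i, j, hij2, hj, hncl, rfl⟩⟩

lemma filter_chord_trans₂ (ht1 : 1 ≤ t) (htn : t ≤ n) :
    (T₁.filter (IsArcChord M a (n + 1))).filter (IsArcChord M (a + (t : ZMod M)) (n + 1 - t)) =
      T₁.filter (IsArcChord M (a + (t : ZMod M)) (n + 1 - t)) := by
  ext e
  simp only [Finset.mem_filter, and_assoc]
  constructor
  · rintro ⟨h1, -, h3⟩
    exact ⟨h1, h3⟩
  · rintro ⟨h1, h2⟩
    obtain ⟨i, j, hij2, hj, hncl, rfl⟩ := h2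
    refine ⟨h1, ?_, ⟨i, j, hij2, hj, hncl, rfl⟩⟩
    rw [och_shift]
    exact ⟨t + i, t + j, by omega, by omega, by omega, rfl⟩

lemma apex_t (hn : 1 ≤ n) (ht1 : 1 ≤ t) (htn : t ≤ n)
    (h₁ : CSTriangulation n T₁) (h₂ : CSTriangulation n T₂)
    (hD : och a 0 (n + 1) ∈ T₁) (hD' : och a t (t + (n + 1)) ∈ T₂)
    (hc₁ : (T₁ \ T₂).card ≤ 2) (hc₂ : (T₂ \ T₁).card ≤ 2) :
    Apex M a (n + 1) (T₁.filter (IsArcChord M a (n + 1))) t := by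
  refine ⟨ht1, by omega, ?_, ?_⟩
  · rcases Nat.lt_or_ge t 2 with h | h
    · exact Or.inl (by omega)
    · right
      exact Finset.mem_filter.mpr ⟨rect_mem₁ hn h htn h₁ h₂ hD hD' hc₁ hc₂,
        ⟨0, t, by omega, by omega, by omega, rfl⟩⟩
  · rcases Nat.lt_or_ge t n with h | h
    · right
      exact Finset.mem_filter.mpr ⟨rect_mem₂ hn ht1 (by omega) h₁ h₂ hD hD' hc₁ hc₂,
        ⟨t, n + 1, by omega, by omega, by omega, rfl⟩⟩
    · exact Or.inl (by omega)

/-- reconstruction of `T₁` from the two sub-arc filters -/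
lemma recon (hn : 1 ≤ n) (ht1 : 1 ≤ t) (htn : t ≤ n)
    (h₁ : CSTriangulation n T₁) (h₂ : CSTriangulation n T₂)
    (hDc : centralDiag n a ∈ T₁) (hD' : och a t (t + (n + 1)) ∈ T₂)
    (hc₁ : (T₁ \ T₂).card ≤ 2) (hc₂ : (T₂ \ T₁).card ≤ 2) :
    T₁ = insert (och a 0 (n + 1))
      ((glueSet M a (n + 1) t (T₁.filter (IsArcChord M a t))
          (T₁.filter (IsArcChord M (a + (t : ZMod M)) (n + 1 - t)))) ∪
       (glueSet M a (n + 1) t (T₁.filter (IsArcChord M a t))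
          (T₁.filter (IsArcChord M (a + (t : ZMod M)) (n + 1 - t)))).image σ) := by
  have hD : och a 0 (n + 1) ∈ T₁ := by rwa [centralDiag_eq_och] at hDc
  have hT' := psi_restrict hn h₁ hDc
  have hapx := apex_t hn ht1 htn h₁ h₂ hD hD' hc₁ hc₂
  have hdec := decomp (m := M) (by omega) (by omega) hT' hapx
  rw [filter_chord_trans₁ htn, filter_chord_trans₂ ht1 htn] at hdec
  have hpsi := psi_decomp hn h₁ hDc
  rw [← hdec]
  exact hpsi

lemma filt₁_arcTri (hn : 1 ≤ n) (ht1 : 1 ≤ t) (htn : t ≤ n)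
    (h₁ : CSTriangulation n T₁) (h₂ : CSTriangulation n T₂)
    (hDc : centralDiag n a ∈ T₁) (hD' : och a t (t + (n + 1)) ∈ T₂)
    (hc₁ : (T₁ \ T₂).card ≤ 2) (hc₂ : (T₂ \ T₁).card ≤ 2) :
    ArcTri M a t (T₁.filter (IsArcChord M a t)) := by
  have hD : och a 0 (n + 1) ∈ T₁ := by rwa [centralDiag_eq_och] at hDc
  have hT' := psi_restrict hn h₁ hDc
  have hapx := apex_t hn ht1 htn h₁ h₂ hD hD' hc₁ hc₂
  have h := restrict₁ (m := M) (by omega) (by omega) hT' hapx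
  rwa [filter_chord_trans₁ htn] at h

lemma filt₂_arcTri (hn : 1 ≤ n) (ht1 : 1 ≤ t) (htn : t ≤ n)
    (h₁ : CSTriangulation n T₁) (h₂ : CSTriangulation n T₂)
    (hDc : centralDiag n a ∈ T₁) (hD' : och a t (t + (n + 1)) ∈ T₂)
    (hc₁ : (T₁ \ T₂).card ≤ 2) (hc₂ : (T₂ \ T₁).card ≤ 2) :
    ArcTri M (a + (t : ZMod M)) (n + 1 - t)
      (T₁.filter (IsArcChord M (a + (t : ZMod M)) (n + 1 - t))) := by
  have hD : och a 0 (n + 1) ∈ T₁ := by rwa [centralDiag_eq_och] at hDc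
  have hT' := psi_restrict hn h₁ hDc
  have hapx := apex_t hn ht1 htn h₁ h₂ hD hD' hc₁ hc₂
  have h := restrict₂ (m := M) (by omega) (by omega) hT' hapx
  rwa [filter_chord_trans₂ ht1 htn] at h

theorem card_num_le (hn : 1 ≤ n) (a : ZMod (2 * n + 2)) (t : ℕ) (ht1 : 1 ≤ t) (htn : t ≤ n) :
    Nat.card {p : Finset (Sym2 (ZMod (2 * n + 2))) × Finset (Sym2 (ZMod (2 * n + 2))) //
        CSTriangulation n p.1 ∧ CSTriangulation n p.2 ∧
        centralDiag n a ∈ p.1 ∧ centralDiag n (a + (t : ZMod (2 * n + 2))) ∈ p.2 ∧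
        p.1 ≠ p.2 ∧ (p.1 \ p.2).card ≤ 2 ∧ (p.2 \ p.1).card ≤ 2} ≤
      catalan (t - 1) * catalan (n - t) := by
  haveI : NeZero (2 * n + 2) := ⟨by omega⟩
  have hD'och : ∀ (T : Finset (Sym2 (ZMod M))),
      centralDiag n (a + (t : ZMod (2 * n + 2))) ∈ T → och a t (t + (n + 1)) ∈ T := by
    intro T h
    rwa [centralDiag_eq_och'] at h
  set H : {p : Finset (Sym2 (ZMod (2 * n + 2))) × Finset (Sym2 (ZMod (2 * n + 2))) //
        CSTriangulation n p.1 ∧ CSTriangulation n p.2 ∧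
        centralDiag n a ∈ p.1 ∧ centralDiag n (a + (t : ZMod (2 * n + 2))) ∈ p.2 ∧
        p.1 ≠ p.2 ∧ (p.1 \ p.2).card ≤ 2 ∧ (p.2 \ p.1).card ≤ 2} →
      ({T' : Finset (Sym2 (ZMod (2 * n + 2))) // ArcTri M a t T'} ×
       {T' : Finset (Sym2 (ZMod (2 * n + 2))) //
          ArcTri M (a + (t : ZMod (2 * n + 2))) (n + 1 - t) T'}) :=
    fun x => ⟨⟨x.1.1.filter (IsArcChord M a t),
        filt₁_arcTri hn ht1 htn x.2.1 x.2.2.1 x.2.2.2.1 (hD'och _ x.2.2.2.2.1)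
          x.2.2.2.2.2.2.1 x.2.2.2.2.2.2.2⟩,
      ⟨x.1.1.filter (IsArcChord M (a + (t : ZMod (2 * n + 2))) (n + 1 - t)),
        filt₂_arcTri hn ht1 htn x.2.1 x.2.2.1 x.2.2.2.1 (hD'och _ x.2.2.2.2.1)
          x.2.2.2.2.2.2.1 x.2.2.2.2.2.2.2⟩⟩ with hH
  have hinj : Function.Injective H := by
    rintro ⟨⟨S₁, S₂⟩, hx1, hx2, hx3, hx4, hx5, hx6, hx7⟩ ⟨⟨R₁, R₂⟩, hy1, hy2, hy3, hy4, hy5, hy6, hy7⟩ h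
    simp only [hH, Subtype.mk.injEq, Prod.mk.injEq] at h
    dsimp only at hx1 hx2 hx3 hx4 hx5 hx6 hx7 hy1 hy2 hy3 hy4 hy5 hy6 hy7 h
    have e1 : S₁ = R₁ := by
      rw [recon hn ht1 htn hx1 hx2 hx3 (hD'och _ hx4) hx6 hx7,
        recon hn ht1 htn hy1 hy2 hy3 (hD'och _ hy4) hy6 hy7, h.1, h.2]
    have e2 : S₂ = R₂ := by
      rw [flip_T₂ hn ht1 htn hx1 hx2 (by rwa [centralDiag_eq_och] at hx3) (hD'och _ hx4) hx6 hx7,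
        flip_T₂ hn ht1 htn hy1 hy2 (by rwa [centralDiag_eq_och] at hy3) (hD'och _ hy4) hy6 hy7, e1]
    exact Subtype.ext (Prod.ext e1 e2)
  calc Nat.card _ ≤ Nat.card ({T' : Finset (Sym2 (ZMod (2 * n + 2))) // ArcTri M a t T'} ×
       {T' : Finset (Sym2 (ZMod (2 * n + 2))) //
          ArcTri M (a + (t : ZMod (2 * n + 2))) (n + 1 - t) T'}) :=
        Nat.card_le_card_of_injective H hinj
    _ = catalan (t - 1) * catalan (n - t) := by
        rw [Nat.card_prod, card_arcTri (m := M) (by omega) t ht1 (by omega) a,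
          card_arcTri (m := M) (by omega) (n + 1 - t) (by omega) (by omega)
            (a + (t : ZMod (2 * n + 2)))]
        rw [show n + 1 - t - 1 = n - t by omega]

end Num

end TypeB

namespace TypeB

open Stirling Real Nat

noncomputable def sA : ℝ := Real.sqrt Real.pi * 2 / (Real.exp 1) ^ 2
noncomputable def sB : ℝ := Real.exp 1 / (Real.sqrt 2 * Real.pi)

lemma sA_pos : 0 < sA := by
  have := Real.pi_pos
  unfold sA
  positivity

lemma sB_pos : 0 < sB := by
  have := Real.pi_pos
  unfold sB
  positivity

lemma stirling_ge (k : ℕ) (hk : 1 ≤ k) : Real.sqrt Real.pi ≤ stirlingSeq k := by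
  obtain ⟨j, rfl⟩ : ∃ j, k = j + 1 := ⟨k - 1, by omega⟩
  have h1 : Filter.Tendsto (stirlingSeq ∘ Nat.succ) Filter.atTop (nhds (Real.sqrt Real.pi)) :=
    (tendsto_stirlingSeq_sqrt_pi).comp (Filter.tendsto_add_atTop_nat 1)
  exact stirlingSeq'_antitone.le_of_tendsto h1 j

lemma stirling_le (k : ℕ) (hk : 1 ≤ k) : stirlingSeq k ≤ Real.exp 1 / Real.sqrt 2 := by
  obtain ⟨j, rfl⟩ : ∃ j, k = j + 1 := ⟨k - 1, by omega⟩
  have := stirlingSeq'_antitone (Nat.zero_le j)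
  simpa [stirlingSeq_one] using this

lemma stirling_pos (k : ℕ) (hk : 1 ≤ k) : 0 < stirlingSeq k := by
  have := stirlingSeq'_pos (k - 1)
  rwa [show k - 1 + 1 = k by omega] at this

lemma factorial_eq_stirling (k : ℕ) (hk : 1 ≤ k) :
    (k ! : ℝ) = stirlingSeq k * (Real.sqrt (2 * k) * ((k : ℝ) / Real.exp 1) ^ k) := by
  have hd : Real.sqrt (2 * k) * ((k : ℝ) / Real.exp 1) ^ k ≠ 0 := by
    have hk' : (0 : ℝ) < k := by exact_mod_cast hk
    have he := Real.exp_pos 1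
    positivity
  rw [stirlingSeq, div_mul_cancel₀ _ hd]

lemma centralBinom_real (k : ℕ) (hk : 1 ≤ k) :
    (Nat.centralBinom k : ℝ) =
      stirlingSeq (2 * k) / (stirlingSeq k) ^ 2 * (4 ^ k / Real.sqrt k) := by
  have hk' : (0 : ℝ) < k := by exact_mod_cast hk
  have hnat : Nat.centralBinom k * k ! * k ! = (2 * k)! := by
    have h := Nat.choose_mul_factorial_mul_factorial (show k ≤ 2 * k by omega)
    rw [show 2 * k - k = k by omega] at h
    rw [Nat.centralBinom_eq_two_mul_choose]
    exact h
  have hcast : (Nat.centralBinom k : ℝ) * (k ! : ℝ) * (k ! : ℝ) = ((2 * k)! : ℝ) := by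
    exact_mod_cast congrArg (Nat.cast (R := ℝ)) hnat
  rw [factorial_eq_stirling k hk, factorial_eq_stirling (2 * k) (by omega)] at hcast
  have hs1 : 0 < stirlingSeq k := stirling_pos k hk
  have hx : (0 : ℝ) < ((k : ℝ) / Real.exp 1) ^ k := by
    have := Real.exp_pos 1
    positivity
  have hr : (0 : ℝ) < Real.sqrt k := Real.sqrt_pos.mpr hk'
  have hrr : Real.sqrt (k : ℝ) * Real.sqrt (k : ℝ) = (k : ℝ) := Real.mul_self_sqrt hk'.le
  have hq1s : Real.sqrt (2 * (k : ℝ)) * Real.sqrt (2 * (k : ℝ)) = 2 * (k : ℝ) :=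
    Real.mul_self_sqrt (by positivity)
  push_cast at hcast
  have h4 : Real.sqrt (2 * (2 * (k : ℝ))) = 2 * Real.sqrt k := by
    rw [show 2 * (2 * (k : ℝ)) = 4 * k by ring, Real.sqrt_mul (by norm_num) (k : ℝ),
      show Real.sqrt (4 : ℝ) = 2 by
        rw [show (4 : ℝ) = 2 ^ 2 by norm_num, Real.sqrt_sq (by norm_num)]]
  have h5 : ((2 * (k : ℝ)) / Real.exp 1) ^ (2 * k) = 4 ^ k * (((k : ℝ) / Real.exp 1) ^ k) ^ 2 := by
    rw [show (2 * (k : ℝ)) / Real.exp 1 = 2 * ((k : ℝ) / Real.exp 1) by ring, mul_pow,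
      show (2 : ℝ) ^ (2 * k) = 4 ^ k by rw [pow_mul]; norm_num,
      show (2 : ℕ) * k = k * 2 by ring, pow_mul]
  rw [h4, h5] at hcast
  have key : (Nat.centralBinom k : ℝ) * (stirlingSeq k ^ 2 * Real.sqrt k) *
      (2 * (k : ℝ) * (((k : ℝ) / Real.exp 1) ^ k) ^ 2) =
      stirlingSeq (2 * k) * 4 ^ k * (2 * (k : ℝ) * (((k : ℝ) / Real.exp 1) ^ k) ^ 2) := by
    linear_combination Real.sqrt (k : ℝ) * hcast -
      (Nat.centralBinom k : ℝ) * stirlingSeq k ^ 2 * (((k : ℝ) / Real.exp 1) ^ k) ^ 2 *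
        Real.sqrt (k : ℝ) * hq1s +
      2 * stirlingSeq (2 * k) * 4 ^ k * (((k : ℝ) / Real.exp 1) ^ k) ^ 2 * hrr
  have hc2 : (2 * (k : ℝ) * (((k : ℝ) / Real.exp 1) ^ k) ^ 2) ≠ 0 := by positivity
  have hkey := mul_right_cancel₀ hc2 key
  rw [_root_.div_mul_div_comm, eq_div_iff (by positivity)]
  linear_combination hkey

lemma centralBinom_upper (k : ℕ) (hk : 1 ≤ k) :
    (Nat.centralBinom k : ℝ) ≤ sB * (4 ^ k / Real.sqrt k) := by
  have hk' : (0 : ℝ) < k := by exact_mod_cast hk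
  have hr : (0 : ℝ) < Real.sqrt k := Real.sqrt_pos.mpr hk'
  have hpi := Real.pi_pos
  have hratio : stirlingSeq (2 * k) / (stirlingSeq k) ^ 2 ≤ sB := by
    have h1 : stirlingSeq (2 * k) ≤ Real.exp 1 / Real.sqrt 2 := stirling_le _ (by omega)
    have h2 : Real.sqrt Real.pi ≤ stirlingSeq k := stirling_ge _ hk
    have h3 : Real.pi ≤ (stirlingSeq k) ^ 2 := by
      have := mul_le_mul h2 h2 (Real.sqrt_nonneg _) (stirling_pos k hk).le
      rwa [Real.mul_self_sqrt Real.pi_pos.le, ← sq] at this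
    have hs2 : (0 : ℝ) < (stirlingSeq k) ^ 2 := pow_pos (stirling_pos k hk) 2
    rw [sB]
    refine (div_le_div_iff₀ hs2 (show (0 : ℝ) < Real.sqrt 2 * Real.pi by positivity)).mpr ?_
    calc stirlingSeq (2 * k) * (Real.sqrt 2 * Real.pi) ≤
        (Real.exp 1 / Real.sqrt 2) * (Real.sqrt 2 * Real.pi) := by
          apply mul_le_mul_of_nonneg_right h1 (by positivity)
      _ = Real.exp 1 * Real.pi := by
          field_simp
      _ ≤ Real.exp 1 * (stirlingSeq k) ^ 2 := by
          apply mul_le_mul_of_nonneg_left h3 (Real.exp_pos 1).le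
  rw [centralBinom_real k hk]
  apply mul_le_mul_of_nonneg_right hratio (by positivity)

lemma centralBinom_lower (k : ℕ) (hk : 1 ≤ k) :
    sA * (4 ^ k / Real.sqrt k) ≤ (Nat.centralBinom k : ℝ) := by
  have hk' : (0 : ℝ) < k := by exact_mod_cast hk
  have hr : (0 : ℝ) < Real.sqrt k := Real.sqrt_pos.mpr hk'
  have hpi := Real.pi_pos
  have hratio : sA ≤ stirlingSeq (2 * k) / (stirlingSeq k) ^ 2 := by
    have h1 : Real.sqrt Real.pi ≤ stirlingSeq (2 * k) := stirling_ge _ (by omega)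
    have h2 : stirlingSeq k ≤ Real.exp 1 / Real.sqrt 2 := stirling_le _ hk
    have h3 : (stirlingSeq k) ^ 2 ≤ (Real.exp 1) ^ 2 / 2 := by
      have hs := (stirling_pos k hk).le
      have := mul_le_mul h2 h2 hs (by positivity)
      calc (stirlingSeq k) ^ 2 = stirlingSeq k * stirlingSeq k := sq (stirlingSeq k) ▸ by ring
        _ ≤ (Real.exp 1 / Real.sqrt 2) * (Real.exp 1 / Real.sqrt 2) := this
        _ = (Real.exp 1) ^ 2 / 2 := by
            rw [_root_.div_mul_div_comm, Real.mul_self_sqrt (by norm_num)]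
            ring
    have hs2 : (0 : ℝ) < (stirlingSeq k) ^ 2 := pow_pos (stirling_pos k hk) 2
    rw [sA]
    refine (div_le_div_iff₀ (show (0 : ℝ) < (Real.exp 1) ^ 2 by positivity) hs2).mpr ?_
    calc Real.sqrt Real.pi * 2 * (stirlingSeq k) ^ 2 ≤
        Real.sqrt Real.pi * 2 * ((Real.exp 1) ^ 2 / 2) := by
          apply mul_le_mul_of_nonneg_left h3 (by positivity)
      _ = Real.sqrt Real.pi * (Real.exp 1) ^ 2 := by ring
      _ ≤ stirlingSeq (2 * k) * (Real.exp 1) ^ 2 := by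
          apply mul_le_mul_of_nonneg_right h1 (by positivity)
  rw [centralBinom_real k hk]
  apply mul_le_mul_of_nonneg_right hratio (by positivity)

lemma catalan_real (k : ℕ) : (catalan k : ℝ) = (Nat.centralBinom k : ℝ) / (k + 1) := by
  have h := succ_mul_catalan_eq_centralBinom k
  have : ((k : ℝ) + 1) * (catalan k : ℝ) = (Nat.centralBinom k : ℝ) := by exact_mod_cast h
  field_simp
  linarith [this]

lemma catalan_le_succ (k : ℕ) : catalan k ≤ catalan (k + 1) := by
  rw [catalan_succ]
  have hmem : (⟨k, Nat.lt_succ_self k⟩ : Fin k.succ) ∈ Finset.univ := Finset.mem_univ _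
  have := Finset.single_le_sum (f := fun i : Fin k.succ => catalan i * catalan (k - i))
    (fun i _ => Nat.zero_le _) hmem
  simpa using this

end TypeB

namespace TypeB

open Stirling Real

lemma catalan_pos' (k : ℕ) : 0 < catalan k := by
  rcases Nat.eq_zero_or_pos (catalan k) with h0 | h
  · exfalso
    have h := succ_mul_catalan_eq_centralBinom k
    rw [h0, Nat.mul_zero] at h
    have := Nat.centralBinom_pos k
    omega
  · exact h

lemma catalan_upper (k : ℕ) (hk : 1 ≤ k) :
    (catalan k : ℝ) ≤ sB * (4 ^ k / (Real.sqrt k * (k + 1))) := by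
  have hk' : (0 : ℝ) < k := by exact_mod_cast hk
  have hr : (0 : ℝ) < Real.sqrt k := Real.sqrt_pos.mpr hk'
  rw [catalan_real]
  have h := centralBinom_upper k hk
  rw [div_le_iff₀ (by positivity)]
  calc (Nat.centralBinom k : ℝ) ≤ sB * (4 ^ k / Real.sqrt k) := h
    _ = sB * (4 ^ k / (Real.sqrt k * (k + 1))) * (k + 1) := by
        field_simp

lemma catalan_lower (k : ℕ) (hk : 1 ≤ k) :
    sA * (4 ^ k / (Real.sqrt k * (k + 1))) ≤ (catalan k : ℝ) := by
  have hk' : (0 : ℝ) < k := by exact_mod_cast hk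
  have hr : (0 : ℝ) < Real.sqrt k := Real.sqrt_pos.mpr hk'
  rw [catalan_real]
  have h := centralBinom_lower k hk
  rw [le_div_iff₀ (by positivity)]
  calc sA * (4 ^ k / (Real.sqrt k * (k + 1))) * (k + 1) = sA * (4 ^ k / Real.sqrt k) := by
        field_simp
    _ ≤ (Nat.centralBinom k : ℝ) := h

lemma sqrt_two_le : Real.sqrt 2 ≤ 1.5 := by
  have h := Real.sq_sqrt (show (0:ℝ) ≤ 2 by norm_num)
  nlinarith [Real.sqrt_nonneg (2 : ℝ)]

lemma ineq₁ (d w : ℕ) (hw : 1 ≤ w) (hd : d = w + 1) :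
    (d : ℝ) * Real.sqrt d ≤ 3 * (Real.sqrt w * (w + 1)) := by
  have hw' : (1 : ℝ) ≤ w := by exact_mod_cast hw
  have h1 : Real.sqrt d ≤ Real.sqrt 2 * Real.sqrt w := by
    rw [← Real.sqrt_mul (by norm_num)]
    apply Real.sqrt_le_sqrt
    rw [hd]
    push_cast
    linarith
  have h2 : (d : ℝ) * Real.sqrt d ≤ (d : ℝ) * (Real.sqrt 2 * Real.sqrt w) :=
    mul_le_mul_of_nonneg_left h1 (by positivity)
  refine h2.trans ?_
  have hdr : (d : ℝ) = (w : ℝ) + 1 := by rw [hd]; push_cast; ring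
  rw [hdr]
  nlinarith [mul_nonneg (show (0:ℝ) ≤ 3 - Real.sqrt 2 by nlinarith [sqrt_two_le])
    (mul_nonneg (Real.sqrt_nonneg (w : ℝ)) (show (0:ℝ) ≤ (w:ℝ) + 1 by positivity))]

lemma ineq₂ (n W : ℕ) (hn3 : 3 ≤ n) (hW : n ≤ 2 * W + 1) :
    Real.sqrt n * ((n : ℝ) + 1) ≤ 4 * (Real.sqrt W * (W + 1)) := by
  have hW1 : 1 ≤ W := by omega
  have h1 : Real.sqrt n ≤ 2 * Real.sqrt W := by
    rw [show (2 : ℝ) = Real.sqrt 4 by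
      rw [show (4 : ℝ) = 2 ^ 2 by norm_num, Real.sqrt_sq (by norm_num)],
      ← Real.sqrt_mul (by norm_num)]
    apply Real.sqrt_le_sqrt
    push_cast
    have : (n : ℝ) ≤ 2 * W + 1 := by exact_mod_cast hW
    have hW1' : (1 : ℝ) ≤ W := by exact_mod_cast hW1
    linarith
  have h2 : (n : ℝ) + 1 ≤ 2 * ((W : ℝ) + 1) := by
    have : (n : ℝ) ≤ 2 * W + 1 := by exact_mod_cast hW
    linarith
  calc Real.sqrt n * ((n : ℝ) + 1) ≤ (2 * Real.sqrt W) * (2 * ((W : ℝ) + 1)) :=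
        mul_le_mul h1 h2 (by positivity) (by positivity)
    _ = 4 * (Real.sqrt W * (W + 1)) := by ring

set_option maxHeartbeats 1000000 in
theorem catalan_ratio_bound (n t : ℕ) (hn : 1 ≤ n) (ht1 : 1 ≤ t) (htn : t ≤ n) :
    (catalan (t - 1) : ℝ) * (catalan (n - t) : ℝ) * ((min t (n + 1 - t) : ℕ) : ℝ) ^ ((3:ℝ)/2) ≤
      (4 * sB ^ 2 / sA + 1) * (catalan n : ℝ) := by
  have hC0 : (0 : ℝ) < 4 * sB ^ 2 / sA := by
    have := sA_pos; have := sB_pos; positivity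
  set d : ℕ := min t (n + 1 - t) with hdd
  have hd1 : 1 ≤ d := by omega
  have hd0 : (0 : ℝ) < d := by exact_mod_cast hd1
  have hrpow : ((d : ℕ) : ℝ) ^ ((3:ℝ)/2) = (d : ℝ) * Real.sqrt d := by
    rw [show (3:ℝ)/2 = 1 + 1/2 by norm_num, Real.rpow_add hd0, Real.rpow_one,
      ← Real.sqrt_eq_rpow]
  rw [hrpow]
  rcases eq_or_lt_of_le hd1 with hd1' | hd2
  · -- d = 1 : t = 1 or t = n
    have hd : d = 1 := hd1'.symm
    have hcat : catalan (t - 1) * catalan (n - t) ≤ catalan n := by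
      have hmono : catalan (n - 1) ≤ catalan n := by
        have := catalan_le_succ (n - 1)
        rwa [show n - 1 + 1 = n by omega] at this
      have ht : t = 1 ∨ t = n := by omega
      rcases ht with h | h
      · rw [h]
        simpa using hmono
      · rw [h, Nat.sub_self]
        simpa using hmono
    have hcat' : (catalan (t-1) : ℝ) * (catalan (n-t) : ℝ) ≤ (catalan n : ℝ) := by
      exact_mod_cast hcat
    rw [hd]
    push_cast
    rw [Real.sqrt_one]
    have hc1 : (1 : ℝ) ≤ 4 * sB ^ 2 / sA + 1 := by linarith
    have hcn : (0 : ℝ) ≤ (catalan n : ℝ) := by positivity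
    nlinarith [hcat', hcn]
  · -- d ≥ 2
    set u : ℕ := t - 1 with hu
    set v : ℕ := n - t with hv
    have hu1 : 1 ≤ u := by omega
    have hv1 : 1 ≤ v := by omega
    have huv : u + v = n - 1 := by omega
    have hn3 : 3 ≤ n := by omega
    have hL1 := catalan_upper u hu1
    have hL2 := catalan_upper v hv1
    have hL3 := catalan_lower n hn
    have hsu : (0:ℝ) < Real.sqrt u := Real.sqrt_pos.mpr (by exact_mod_cast hu1)
    have hsv : (0:ℝ) < Real.sqrt v := Real.sqrt_pos.mpr (by exact_mod_cast hv1)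
    have hsn : (0:ℝ) < Real.sqrt n := Real.sqrt_pos.mpr (by exact_mod_cast hn)
    have hsd : (0:ℝ) ≤ Real.sqrt d := Real.sqrt_nonneg _
    -- the core inequality
    have hcore : ((d:ℝ) * Real.sqrt d) * (Real.sqrt n * ((n:ℝ)+1)) ≤
        16 * ((Real.sqrt u * ((u:ℝ)+1)) * (Real.sqrt v * ((v:ℝ)+1))) := by
      rcases le_total u v with h | h
      · -- w = u, W = v
        have hi1 := ineq₁ d u hu1 (by omega)
        have hi2 := ineq₂ n v hn3 (by omega)
        have hp1 : (0:ℝ) ≤ (d:ℝ) * Real.sqrt d := by positivity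
        have hp2 : (0:ℝ) ≤ 3 * (Real.sqrt u * ((u:ℝ)+1)) := by positivity
        calc ((d:ℝ) * Real.sqrt d) * (Real.sqrt n * ((n:ℝ)+1)) ≤
            (3 * (Real.sqrt u * ((u:ℝ)+1))) * (4 * (Real.sqrt v * ((v:ℝ)+1))) :=
              mul_le_mul hi1 hi2 (by positivity) hp2
          _ ≤ 16 * ((Real.sqrt u * ((u:ℝ)+1)) * (Real.sqrt v * ((v:ℝ)+1))) := by
              nlinarith [mul_nonneg (mul_nonneg hsu.le (by positivity : (0:ℝ) ≤ (u:ℝ)+1))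
                (mul_nonneg hsv.le (by positivity : (0:ℝ) ≤ (v:ℝ)+1))]
      · -- w = v, W = u
        have hi1 := ineq₁ d v hv1 (by omega)
        have hi2 := ineq₂ n u hn3 (by omega)
        have hp2 : (0:ℝ) ≤ 3 * (Real.sqrt v * ((v:ℝ)+1)) := by positivity
        calc ((d:ℝ) * Real.sqrt d) * (Real.sqrt n * ((n:ℝ)+1)) ≤
            (3 * (Real.sqrt v * ((v:ℝ)+1))) * (4 * (Real.sqrt u * ((u:ℝ)+1))) :=
              mul_le_mul hi1 hi2 (by positivity) hp2
          _ ≤ 16 * ((Real.sqrt u * ((u:ℝ)+1)) * (Real.sqrt v * ((v:ℝ)+1))) := by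
              nlinarith [mul_nonneg (mul_nonneg hsu.le (by positivity : (0:ℝ) ≤ (u:ℝ)+1))
                (mul_nonneg hsv.le (by positivity : (0:ℝ) ≤ (v:ℝ)+1))]
    -- assemble
    have hB := sB_pos
    have hA := sA_pos
    have step1 : (catalan u : ℝ) * (catalan v : ℝ) * ((d:ℝ) * Real.sqrt d) ≤
        (sB * (4 ^ u / (Real.sqrt u * (u + 1)))) * (sB * (4 ^ v / (Real.sqrt v * (v + 1)))) *
          ((d:ℝ) * Real.sqrt d) := by
      apply mul_le_mul_of_nonneg_right _ (by positivity)
      exact mul_le_mul hL1 hL2 (by positivity) (by positivity)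
    refine step1.trans ?_
    have step3 : (4 * sB ^ 2 / sA) * (sA * (4 ^ n / (Real.sqrt n * (n + 1)))) ≤
        (4 * sB ^ 2 / sA + 1) * (catalan n : ℝ) := by
      have h1 : (4 * sB ^ 2 / sA) * (sA * (4 ^ n / (Real.sqrt n * (n + 1)))) ≤
          (4 * sB ^ 2 / sA) * (catalan n : ℝ) := mul_le_mul_of_nonneg_left hL3 hC0.le
      have h2 : (4 * sB ^ 2 / sA) * (catalan n : ℝ) ≤ (4 * sB ^ 2 / sA + 1) * (catalan n : ℝ) := by
        have : (0:ℝ) ≤ (catalan n : ℝ) := by positivity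
        nlinarith
      exact h1.trans h2
    refine le_trans ?_ step3
    -- fraction comparison
    have heqL : (sB * (4 ^ u / (Real.sqrt u * (u + 1)))) * (sB * (4 ^ v / (Real.sqrt v * (v + 1)))) *
        ((d:ℝ) * Real.sqrt d) =
        (sB ^ 2 * (4:ℝ) ^ (u + v) * ((d:ℝ) * Real.sqrt d)) /
          ((Real.sqrt u * ((u:ℝ) + 1)) * (Real.sqrt v * ((v:ℝ) + 1))) := by
      rw [pow_add]
      field_simp
    have heqR : (4 * sB ^ 2 / sA) * (sA * (4 ^ n / (Real.sqrt n * (n + 1)))) =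
        (4 * sB ^ 2 * (4:ℝ) ^ n) / (Real.sqrt n * ((n:ℝ) + 1)) := by
      field_simp
    rw [heqL, heqR, div_le_div_iff₀ (by positivity) (by positivity)]
    have h4n : (4:ℝ) ^ n = 4 ^ (u + v) * 4 := by
      rw [show n = (u + v) + 1 by omega, pow_succ]
    rw [h4n]
    have hfour : (0:ℝ) ≤ sB ^ 2 * 4 ^ (u + v) := by positivity
    calc sB ^ 2 * (4:ℝ) ^ (u + v) * ((d:ℝ) * Real.sqrt d) * (Real.sqrt n * ((n:ℝ) + 1)) =
        (sB ^ 2 * (4:ℝ) ^ (u + v)) * (((d:ℝ) * Real.sqrt d) * (Real.sqrt n * ((n:ℝ) + 1))) := by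
          ring
      _ ≤ (sB ^ 2 * (4:ℝ) ^ (u + v)) *
          (16 * ((Real.sqrt u * ((u:ℝ)+1)) * (Real.sqrt v * ((v:ℝ)+1)))) :=
            mul_le_mul_of_nonneg_left hcore hfour
      _ = 4 * sB ^ 2 * ((4:ℝ) ^ (u + v) * 4) *
          (Real.sqrt u * ((u:ℝ) + 1) * (Real.sqrt v * ((v:ℝ) + 1))) := by
          ring

end TypeB

set_option maxHeartbeats 1000000

/-- There are constants `c > 0` and `N` such that for all `n ≥ N` and all distinct central
diagonals `D = centralDiag n a`, `D' = centralDiag n (a + t)` (`1 ≤ t ≤ n`) of the regular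
`(2n+2)`-gon, with `d = d(D,D') = min t (n+1-t) ∈ [1, (n+1)/2]`, the number of flip-graph
edges between `Ψ(D)` and `Ψ(D')` divided by `|Ψ(D)|` is at most `c / d^{3/2}`. -/
theorem typeB_boundary_ratio_upper :
    ∃ c : ℝ, 0 < c ∧ ∃ N : ℕ, ∀ n ≥ N, ∀ a : ZMod (2 * n + 2), ∀ t : ℕ, 1 ≤ t → t ≤ n →
      (Nat.card {p : Finset (Sym2 (ZMod (2 * n + 2))) × Finset (Sym2 (ZMod (2 * n + 2))) //
          CSTriangulation n p.1 ∧ CSTriangulation n p.2 ∧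
          centralDiag n a ∈ p.1 ∧ centralDiag n (a + (t : ZMod (2 * n + 2))) ∈ p.2 ∧
          p.1 ≠ p.2 ∧ (p.1 \ p.2).card ≤ 2 ∧ (p.2 \ p.1).card ≤ 2} : ℝ) /
        (Nat.card {T : Finset (Sym2 (ZMod (2 * n + 2))) //
          CSTriangulation n T ∧ centralDiag n a ∈ T} : ℝ) ≤
      c / ((min t (n + 1 - t) : ℕ) : ℝ) ^ ((3 : ℝ) / 2) := by
  refine ⟨4 * TypeB.sB ^ 2 / TypeB.sA + 1, ?_, 1, ?_⟩
  · have hA := TypeB.sA_pos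
    have hB := TypeB.sB_pos
    positivity
  intro n hn a t ht1 htn
  have hn1 : 1 ≤ n := hn
  have hnum := TypeB.card_num_le hn1 a t ht1 htn
  have hden := TypeB.card_psi hn1 a
  rw [hden]
  have hd1 : 1 ≤ min t (n + 1 - t) := by omega
  have hd0 : (0:ℝ) < ((min t (n + 1 - t) : ℕ) : ℝ) := by exact_mod_cast hd1
  have hpow : (0:ℝ) < ((min t (n + 1 - t) : ℕ) : ℝ) ^ ((3:ℝ)/2) := Real.rpow_pos_of_pos hd0 _
  have hcat : (0:ℝ) < (catalan n : ℝ) := by exact_mod_cast TypeB.catalan_pos' n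
  rw [div_le_div_iff₀ hcat hpow]
  have hstep : (Nat.card {p : Finset (Sym2 (ZMod (2 * n + 2))) × Finset (Sym2 (ZMod (2 * n + 2))) //
          CSTriangulation n p.1 ∧ CSTriangulation n p.2 ∧
          centralDiag n a ∈ p.1 ∧ centralDiag n (a + (t : ZMod (2 * n + 2))) ∈ p.2 ∧
          p.1 ≠ p.2 ∧ (p.1 \ p.2).card ≤ 2 ∧ (p.2 \ p.1).card ≤ 2} : ℝ) ≤
      (catalan (t - 1) : ℝ) * (catalan (n - t) : ℝ) := by
    have : ((Nat.card _ : ℕ) : ℝ) ≤ ((catalan (t - 1) * catalan (n - t) : ℕ) : ℝ) :=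
      Nat.cast_le.mpr hnum
    rw [Nat.cast_mul] at this
    exact this
  calc (Nat.card {p : Finset (Sym2 (ZMod (2 * n + 2))) × Finset (Sym2 (ZMod (2 * n + 2))) //
          CSTriangulation n p.1 ∧ CSTriangulation n p.2 ∧
          centralDiag n a ∈ p.1 ∧ centralDiag n (a + (t : ZMod (2 * n + 2))) ∈ p.2 ∧
          p.1 ≠ p.2 ∧ (p.1 \ p.2).card ≤ 2 ∧ (p.2 \ p.1).card ≤ 2} : ℝ) *
        ((min t (n + 1 - t) : ℕ) : ℝ) ^ ((3:ℝ)/2) ≤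
      (catalan (t - 1) : ℝ) * (catalan (n - t) : ℝ) *
        ((min t (n + 1 - t) : ℕ) : ℝ) ^ ((3:ℝ)/2) :=
        mul_le_mul_of_nonneg_right hstep hpow.le
    _ ≤ (4 * TypeB.sB ^ 2 / TypeB.sA + 1) * (catalan n : ℝ) :=
        TypeB.catalan_ratio_bound n t hn1 ht1 htn
end
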